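/- arXiv:1712.04548 — 4 statements merged into one kernel-verified Lean document; each statement's English description precedes it below -/
import Mathlib

section
/- Let k be a positive integer and let f : ℕ → ℕ give the branching of a sequence of complete f(h)-ary trees of height h. Suppose there exist constants c > 0 and C > 0 such that f(h) ≤ (h/(e·k))^{1/k} − C·h^c for all sufficiently large h. Then θ_k(f(h), h) → 0 as h → ∞. -/
set_option maxHeartbeats 1000000
open scoped ENNReal


open MeasureTheory Filter

/-- A vertex of the complete `n`-ary tree of height `h`: at depth `i ≤ h`,
a vertex is a word of length `i` over an alphabet of size `n`. -/
abbrev TreeVertex (n h : ℕ) : Type := (i : Fin (h + 1)) × (Fin i.val → Fin n)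

/-- The vertex at depth `i` on the root-to-leaf path determined by `leaf`:
the length-`i` prefix of `leaf`. -/
def pathVertex {n h : ℕ} (leaf : Fin h → Fin n) (i : Fin (h + 1)) : TreeVertex n h :=
  ⟨i, fun j => leaf ⟨j.val, lt_of_lt_of_le j.isLt (Nat.lt_succ_iff.mp i.isLt)⟩⟩

/-- The event (set of labelings `ω` of the vertices) that some root-to-leaf path of
the complete `n`-ary tree of height `h` is `k`-accessible: there is a leaf and
indices `0 = r 0 < r 1 < ⋯ < r t = h` with consecutive gaps at most `k` along which
the labels are strictly increasing. -/
def kAccessibleEvent (k n h : ℕ) : Set (TreeVertex n h → ℝ) :=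
  {ω | ∃ leaf : Fin h → Fin n, ∃ t : ℕ, ∃ r : Fin (t + 1) → Fin (h + 1),
    StrictMono r ∧ r 0 = 0 ∧ r (Fin.last t) = Fin.last h ∧
    (∀ i : Fin t, (r i.succ).val ≤ (r i.castSucc).val + k) ∧
    StrictMono fun i => ω (pathVertex leaf (r i))}

/-- The vertices are labelled by i.i.d. Uniform[0,1] random variables: the product
over all vertices of Lebesgue measure restricted to `[0,1]`. -/
noncomputable def treeLabelMeasure (n h : ℕ) : Measure (TreeVertex n h → ℝ) :=
  Measure.pi fun _ => (volume : Measure ℝ).restrict (Set.Icc 0 1)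

/-- `theta k n h` is the probability that the labelled complete `n`-ary tree of
height `h` contains a `k`-accessible root-to-leaf path. -/
noncomputable def theta (k n h : ℕ) : ℝ :=
  (treeLabelMeasure n h (kAccessibleEvent k n h)).toReal

instance : IsProbabilityMeasure ((volume : Measure ℝ).restrict (Set.Icc 0 1)) :=
  ⟨by simp⟩

instance (n h : ℕ) : IsProbabilityMeasure (treeLabelMeasure n h) := by
  unfold treeLabelMeasure; infer_instance

lemma measure_strictMono_le (n h m : ℕ) (v : Fin m → TreeVertex n h)
    (hv : Function.Injective v) :
    treeLabelMeasure n h {ω | StrictMono fun i => ω (v i)} ≤ (m.factorial : ℝ≥0∞)⁻¹ := by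
  classical
  set μ := treeLabelMeasure n h with hμ
  set A : Equiv.Perm (Fin m) → Set (TreeVertex n h → ℝ) :=
    fun σ => {ω | StrictMono fun i => ω (v (σ i))} with hA
  have hmeas : ∀ σ, MeasurableSet (A σ) := by
    intro σ
    have : A σ = ⋂ (i : Fin m) (j : Fin m) (_ : i < j), {ω | ω (v (σ i)) < ω (v (σ j))} := by
      ext ω
      simp only [hA, Set.mem_setOf_eq, Set.mem_iInter]
      exact ⟨fun H i j hij => H hij, fun H a b hab => H a b hab⟩
    rw [this]
    exact MeasurableSet.iInter fun i => MeasurableSet.iInter fun j =>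
      MeasurableSet.iInter fun _ =>
        measurableSet_lt (measurable_pi_apply _) (measurable_pi_apply _)
  have hdisj : Pairwise (Function.onFun Disjoint A) := by
    intro σ τ hst
    refine Set.disjoint_left.mpr fun ω hσ hτ => hst ?_
    set π : Equiv.Perm (Fin m) := τ.trans σ.symm with hπdef
    have hσπ : ∀ i, σ (π i) = τ i := fun i => σ.apply_symm_apply (τ i)
    have hπ : StrictMono (π : Fin m → Fin m) := by
      intro i j hij
      rcases lt_trichotomy (π i) (π j) with hlt | heq | hgt
      · exact hlt
      · exact absurd (π.injective heq) (ne_of_lt hij)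
      · exfalso
        have h1 : ω (v (τ i)) < ω (v (τ j)) := hτ hij
        have h2 : ω (v (σ (π j))) < ω (v (σ (π i))) := hσ hgt
        rw [hσπ, hσπ] at h2
        exact lt_asymm h1 h2
    have hid : (π : Fin m → Fin m) = id :=
      congrArg (fun e : Fin m ≃o Fin m => (e : Fin m → Fin m))
        (Subsingleton.elim (StrictMono.orderIsoOfSurjective π hπ π.surjective) (OrderIso.refl _))
    ext i
    have h3 := hσπ i
    rw [show π i = i from congrFun hid i] at h3
    exact congrArg Fin.val h3
  have hcard : ∀ σ : Equiv.Perm (Fin m), μ (A σ) = μ (A 1) := by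
    intro σ
    set e : Equiv.Perm (TreeVertex n h) := Equiv.Perm.viaFintypeEmbedding σ⁻¹ ⟨v, hv⟩ with he
    have hev : ∀ i, e (v i) = v (σ⁻¹ i) := fun i =>
      Equiv.Perm.viaFintypeEmbedding_apply_image σ⁻¹ ⟨v, hv⟩ i
    have hesymm : ∀ i, e.symm (v i) = v (σ i) := by
      intro i
      rw [Equiv.symm_apply_eq, hev (σ i)]
      simp
    have hmp : MeasurePreserving (MeasurableEquiv.piCongrLeft (fun _ => ℝ) e) μ μ :=
      measurePreserving_piCongrLeft (fun _ => (volume : Measure ℝ).restrict (Set.Icc 0 1)) e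
    have happ : ∀ (ω : TreeVertex n h → ℝ) x,
        (MeasurableEquiv.piCongrLeft (fun _ => ℝ) e) ω x = ω (e.symm x) := by
      intro ω x
      simp [MeasurableEquiv.piCongrLeft, Equiv.piCongrLeft, Equiv.piCongrLeft']
    have hpre : (MeasurableEquiv.piCongrLeft (fun _ => ℝ) e) ⁻¹' (A 1) = A σ := by
      ext ω
      simp only [Set.mem_preimage, hA, Set.mem_setOf_eq, Equiv.Perm.one_apply]
      constructor
      · intro H i j hij
        have := H hij
        simp only [happ, hesymm] at this
        exact this
      · intro H i j hij
        have := H hij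
        simp only [happ, hesymm]
        exact this
    calc μ (A σ) = μ ((MeasurableEquiv.piCongrLeft (fun _ => ℝ) e) ⁻¹' (A 1)) := by rw [hpre]
    _ = μ (A 1) := hmp.measure_preimage (hmeas 1).nullMeasurableSet
  have hunion : (m.factorial : ℝ≥0∞) * μ (A 1) ≤ 1 := by
    have h1 : μ (⋃ σ, A σ) = ∑' σ, μ (A σ) := measure_iUnion hdisj hmeas
    have h2 : ∑' σ : Equiv.Perm (Fin m), μ (A σ) = (m.factorial : ℝ≥0∞) * μ (A 1) := by
      rw [tsum_fintype]
      rw [Finset.sum_congr rfl fun σ _ => hcard σ, Finset.sum_const, Finset.card_univ,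
        Fintype.card_perm, Fintype.card_fin, nsmul_eq_mul]
    calc (m.factorial : ℝ≥0∞) * μ (A 1) = μ (⋃ σ, A σ) := by rw [h1, h2]
    _ ≤ 1 := prob_le_one
  have : μ (A 1) ≤ (m.factorial : ℝ≥0∞)⁻¹ := by
    rw [ENNReal.le_inv_iff_mul_le, mul_comm]
    exact hunion
  have hA1 : {ω : TreeVertex n h → ℝ | StrictMono fun i => ω (v i)} = A 1 := by
    simp [hA]
  rw [hA1]
  exact this

def goodR (k h t : ℕ) (r : Fin (t + 1) → Fin (h + 1)) : Prop :=
  StrictMono r ∧ r 0 = 0 ∧ r (Fin.last t) = Fin.last h ∧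
    ∀ i : Fin t, (r i.succ).val ≤ (r i.castSucc).val + k

lemma card_goodR_le (k h t : ℕ) (hk : 0 < k) (ρ : ℝ) (hρ : 1 ≤ ρ) :
    (Nat.card {r : Fin (t + 1) → Fin (h + 1) // goodR k h t r} : ℝ) * ρ ^ h
      ≤ (∑ j : Fin k, ρ ^ (j.val + 1)) ^ t := by
  classical
  have hρ0 : (0 : ℝ) ≤ ρ := le_trans zero_le_one hρ
  have gap_lemma : ∀ r : Fin (t + 1) → Fin (h + 1), goodR k h t r → ∀ i : Fin t,
      (r i.castSucc).val < (r i.succ).val ∧ (r i.succ).val ≤ (r i.castSucc).val + k :=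
    fun r hr i => ⟨hr.1 (Fin.castSucc_lt_succ (i := i)), hr.2.2.2 i⟩
  set D : {r : Fin (t + 1) → Fin (h + 1) // goodR k h t r} → (Fin t → Fin k) :=
    fun rr i => ⟨(rr.1 i.succ).val - (rr.1 i.castSucc).val - 1, by
      have := gap_lemma rr.1 rr.2 i; omega⟩ with hD
  set F : {r : Fin (t + 1) → Fin (h + 1) // goodR k h t r} → ℕ → ℕ :=
    fun rr i => if hi : i < t then ((D rr ⟨i, hi⟩ : Fin k) : ℕ) + 1 else 0 with hF
  have hFval : ∀ rr (i : ℕ) (hi : i < t),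
      F rr i = (rr.1 (⟨i, hi⟩ : Fin t).succ).val - (rr.1 (⟨i, hi⟩ : Fin t).castSucc).val := by
    intro rr i hi
    have := gap_lemma rr.1 rr.2 ⟨i, hi⟩
    simp only [hF, dif_pos hi, hD]
    omega
  have repr : ∀ rr (j : ℕ) (hj : j ≤ t),
      (rr.1 ⟨j, Nat.lt_succ_of_le hj⟩).val = ∑ i ∈ Finset.range j, F rr i := by
    intro rr j
    induction j with
    | zero =>
      intro _
      have h0 : rr.1 0 = 0 := rr.2.2.1
      simpa using congrArg Fin.val h0
    | succ j ih =>
      intro hj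
      have hjt : j < t := hj
      rw [Finset.sum_range_succ, ← ih (le_of_lt hjt), hFval rr j hjt]
      have hmono := gap_lemma rr.1 rr.2 ⟨j, hjt⟩
      have e1 : (⟨j, hjt⟩ : Fin t).castSucc = ⟨j, Nat.lt_succ_of_le (le_of_lt hjt)⟩ := rfl
      have e2 : (⟨j, hjt⟩ : Fin t).succ = ⟨j + 1, Nat.lt_succ_of_le hj⟩ := rfl
      rw [e1, e2] at hmono ⊢
      omega
  have hsum : ∀ rr, ∑ i : Fin t, (((D rr i : Fin k) : ℕ) + 1) = h := by
    intro rr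
    have h1 : ∑ i : Fin t, (((D rr i : Fin k) : ℕ) + 1) = ∑ i ∈ Finset.range t, F rr i := by
      rw [Finset.sum_range fun i => F rr i]
      apply Finset.sum_congr rfl
      intro i _
      simp only [hF]
      rw [dif_pos i.isLt]
    have h2 := repr rr t le_rfl
    have h3 : rr.1 ⟨t, Nat.lt_succ_of_le le_rfl⟩ = Fin.last h := rr.2.2.2.1
    rw [h1, ← h2, h3]
    rfl
  have hinj : Function.Injective D := by
    intro rr rr' hDeq
    have : rr.1 = rr'.1 := by
      funext j
      apply Fin.ext
      have hj : (j : ℕ) ≤ t := Nat.lt_succ_iff.mp j.isLt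
      have r1 := repr rr j hj
      have r2 := repr rr' j hj
      have : (⟨(j : ℕ), Nat.lt_succ_of_le hj⟩ : Fin (t + 1)) = j := rfl
      rw [this] at r1 r2
      rw [r1, r2]
      apply Finset.sum_congr rfl
      intro i hi
      show F rr i = F rr' i
      simp only [hF]
      by_cases hit : i < t
      · rw [dif_pos hit, dif_pos hit]
        have h5 := congrArg Fin.val (congrFun hDeq ⟨i, hit⟩)
        simp only [hD] at h5
        rw [congrFun hDeq ⟨i, hit⟩]
      · rw [dif_neg hit, dif_neg hit]
    exact Subtype.ext this
  -- now the counting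
  have hcard : Nat.card {r : Fin (t + 1) → Fin (h + 1) // goodR k h t r}
      ≤ (Finset.univ.filter (fun d : Fin t → Fin k =>
          ∑ i : Fin t, ((d i : ℕ) + 1) = h)).card := by
    rw [Nat.card_eq_fintype_card, ← Fintype.card_subtype]
    apply Fintype.card_le_of_injective (fun rr => ⟨D rr, hsum rr⟩)
    intro a b hab
    exact hinj (congrArg Subtype.val hab)
  set S : Finset (Fin t → Fin k) := Finset.univ.filter (fun d : Fin t → Fin k =>
      ∑ i : Fin t, ((d i : ℕ) + 1) = h) with hS
  calc (Nat.card {r : Fin (t + 1) → Fin (h + 1) // goodR k h t r} : ℝ) * ρ ^ h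
      ≤ (S.card : ℝ) * ρ ^ h := by
        apply mul_le_mul_of_nonneg_right _ (pow_nonneg hρ0 h)
        exact_mod_cast hcard
    _ = ∑ d ∈ S, ρ ^ h := by rw [Finset.sum_const, nsmul_eq_mul]
    _ = ∑ d ∈ S, ∏ i : Fin t, ρ ^ ((d i : ℕ) + 1) := by
        apply Finset.sum_congr rfl
        intro d hd
        rw [Finset.prod_pow_eq_pow_sum]
        congr 1
        exact ((Finset.mem_filter.mp hd).2).symm
    _ ≤ ∑ d : Fin t → Fin k, ∏ i : Fin t, ρ ^ ((d i : ℕ) + 1) := by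
        apply Finset.sum_le_sum_of_subset_of_nonneg (Finset.filter_subset _ _)
        intro d _ _
        exact Finset.prod_nonneg fun i _ => pow_nonneg hρ0 _
    _ = ∏ i : Fin t, ∑ j : Fin k, ρ ^ ((j : ℕ) + 1) := by
        rw [Finset.prod_univ_sum]
        rw [Fintype.piFinset_univ]
    _ = (∑ j : Fin k, ρ ^ ((j : ℕ) + 1)) ^ t := by
        rw [Finset.prod_const, Finset.card_univ, Fintype.card_fin]

lemma theta_le_bound (k n h : ℕ) (hk : 0 < k) (ρ y : ℝ) (hρ : 1 ≤ ρ) (hy : 0 < y)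
    (hq : (∑ j : Fin k, ρ ^ (j.val + 1)) / y < 1) :
    theta k n h ≤ (n : ℝ) ^ h * ρ⁻¹ ^ h * (Real.exp y / y) *
      (1 - (∑ j : Fin k, ρ ^ (j.val + 1)) / y)⁻¹ := by
  classical
  set g : ℝ := ∑ j : Fin k, ρ ^ (j.val + 1) with hg
  have hρ0 : (0 : ℝ) < ρ := lt_of_lt_of_le zero_lt_one hρ
  have hg0 : 0 ≤ g := Finset.sum_nonneg fun j _ => pow_nonneg hρ0.le _
  have hq0 : 0 ≤ g / y := div_nonneg hg0 hy.le
  set μ := treeLabelMeasure n h with hμ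
  -- the event is contained in a union
  have hsub : kAccessibleEvent k n h ⊆
      ⋃ (t : ℕ), ⋃ (leaf : Fin h → Fin n), ⋃ (r : Fin (t + 1) → Fin (h + 1)),
        {ω | goodR k h t r ∧ StrictMono fun i => ω (pathVertex leaf (r i))} := by
    rintro ω ⟨leaf, t, r, h1, h2, h3, h4, h5⟩
    exact Set.mem_iUnion.mpr ⟨t, Set.mem_iUnion.mpr ⟨leaf, Set.mem_iUnion.mpr
      ⟨r, ⟨⟨h1, h2, h3, h4⟩, h5⟩⟩⟩⟩
  -- each piece
  have key : ∀ (t : ℕ) (leaf : Fin h → Fin n) (r : Fin (t + 1) → Fin (h + 1)),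
      μ {ω | goodR k h t r ∧ StrictMono fun i => ω (pathVertex leaf (r i))}
        ≤ (if goodR k h t r then (((t + 1).factorial : ℝ≥0∞))⁻¹ else 0) := by
    intro t leaf r
    by_cases hgood : goodR k h t r
    · rw [if_pos hgood]
      refine le_trans (measure_mono fun ω hω => hω.2) ?_
      apply measure_strictMono_le n h (t + 1) (fun i => pathVertex leaf (r i))
      intro i j hij
      have : r i = r j := congrArg Sigma.fst hij
      exact hgood.1.injective this
    · rw [if_neg hgood]
      have : {ω : TreeVertex n h → ℝ |
          goodR k h t r ∧ StrictMono fun i => ω (pathVertex leaf (r i))} = ∅ := by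
        ext ω; simp [hgood]
      rw [this, measure_empty]
  -- union bound
  have hbound : μ (kAccessibleEvent k n h) ≤
      ∑' (t : ℕ), ((Fintype.card (Fin h → Fin n)) : ℝ≥0∞) *
        ((Nat.card {r : Fin (t + 1) → Fin (h + 1) // goodR k h t r} : ℝ≥0∞) *
          (((t + 1).factorial : ℝ≥0∞))⁻¹) := by
    refine le_trans (measure_mono hsub) (le_trans (measure_iUnion_le _) (ENNReal.tsum_le_tsum ?_))
    intro t
    refine le_trans (measure_iUnion_le _) ?_
    rw [tsum_fintype]
    rw [show ((Fintype.card (Fin h → Fin n)) : ℝ≥0∞) *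
        ((Nat.card {r : Fin (t + 1) → Fin (h + 1) // goodR k h t r} : ℝ≥0∞) *
          (((t + 1).factorial : ℝ≥0∞))⁻¹)
      = ∑ _leaf : Fin h → Fin n,
        ((Nat.card {r : Fin (t + 1) → Fin (h + 1) // goodR k h t r} : ℝ≥0∞) *
          (((t + 1).factorial : ℝ≥0∞))⁻¹) by
        rw [Finset.sum_const, Finset.card_univ, nsmul_eq_mul]]
    refine Finset.sum_le_sum fun leaf _ => ?_
    refine le_trans (measure_iUnion_le _) ?_
    rw [tsum_fintype]
    refine le_trans (Finset.sum_le_sum fun r _ => key t leaf r) ?_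
    rw [Finset.sum_ite, Finset.sum_const_zero, add_zero, Finset.sum_const, nsmul_eq_mul]
    apply mul_le_mul_left
    norm_cast
    apply le_of_eq
    rw [Nat.card_eq_fintype_card, Fintype.card_subtype]
  -- real-valued termwise bound
  set K : ℝ := (n : ℝ) ^ h * ρ⁻¹ ^ h * (Real.exp y / y) with hK
  have hK0 : 0 ≤ K := by positivity
  have hterm : ∀ t : ℕ, ((Fintype.card (Fin h → Fin n)) : ℝ≥0∞) *
        ((Nat.card {r : Fin (t + 1) → Fin (h + 1) // goodR k h t r} : ℝ≥0∞) *
          (((t + 1).factorial : ℝ≥0∞))⁻¹)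
      ≤ ENNReal.ofReal (K * (g / y) ^ t) := by
    intro t
    set Nt := Nat.card {r : Fin (t + 1) → Fin (h + 1) // goodR k h t r} with hNt
    have hreal : ((Fintype.card (Fin h → Fin n)) : ℝ) * ((Nt : ℝ) * (((t + 1).factorial : ℝ))⁻¹)
        ≤ K * (g / y) ^ t := by
      have hcardfn : ((Fintype.card (Fin h → Fin n)) : ℝ) = (n : ℝ) ^ h := by
        rw [Fintype.card_fun, Fintype.card_fin, Fintype.card_fin]; push_cast; ring
      have hNle : (Nt : ℝ) ≤ g ^ t * ρ⁻¹ ^ h := by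
        have := card_goodR_le k h t hk ρ hρ
        rw [← hg] at this
        calc (Nt : ℝ) = (Nt : ℝ) * ρ ^ h * ρ⁻¹ ^ h := by
              rw [mul_assoc, ← mul_pow, mul_inv_cancel₀ (ne_of_gt hρ0), one_pow, mul_one]
        _ ≤ g ^ t * ρ⁻¹ ^ h := by
              apply mul_le_mul_of_nonneg_right this (pow_nonneg (inv_nonneg.mpr hρ0.le) h)
      have hfact : (((t + 1).factorial : ℝ))⁻¹ ≤ Real.exp y / y ^ (t + 1) := by
        have h1 : y ^ (t + 1) / ((t + 1).factorial : ℝ) ≤ Real.exp y := by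
          refine le_trans ?_ (Real.sum_le_exp_of_nonneg hy.le (t + 2))
          refine Finset.single_le_sum (f := fun i => y ^ i / (i.factorial : ℝ)) ?_ ?_
          · intro i _; positivity
          · simp [Finset.mem_range]
        rw [le_div_iff₀ (by positivity)]
        calc ((t + 1).factorial : ℝ)⁻¹ * y ^ (t + 1)
            = y ^ (t + 1) / ((t + 1).factorial : ℝ) := by
              rw [div_eq_mul_inv]; ring
        _ ≤ Real.exp y := h1
      rw [hcardfn]
      calc (n : ℝ) ^ h * ((Nt : ℝ) * (((t + 1).factorial : ℝ))⁻¹)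
          ≤ (n : ℝ) ^ h * ((g ^ t * ρ⁻¹ ^ h) * (Real.exp y / y ^ (t + 1))) := by
            apply mul_le_mul_of_nonneg_left _ (by positivity)
            apply mul_le_mul hNle hfact (by positivity)
            positivity
      _ = K * (g / y) ^ t := by
            rw [hK, div_pow, pow_succ]
            field_simp
    calc ((Fintype.card (Fin h → Fin n)) : ℝ≥0∞) *
        ((Nt : ℝ≥0∞) * (((t + 1).factorial : ℝ≥0∞))⁻¹)
        = ENNReal.ofReal (((Fintype.card (Fin h → Fin n)) : ℝ) *
            ((Nt : ℝ) * (((t + 1).factorial : ℝ))⁻¹)) := by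
          rw [ENNReal.ofReal_mul (by positivity), ENNReal.ofReal_mul (by positivity),
            ENNReal.ofReal_natCast, ENNReal.ofReal_natCast,
            ENNReal.ofReal_inv_of_pos (by positivity), ENNReal.ofReal_natCast]
    _ ≤ ENNReal.ofReal (K * (g / y) ^ t) := ENNReal.ofReal_le_ofReal hreal
  -- sum the geometric series
  have hsummable : Summable (fun t : ℕ => K * (g / y) ^ t) :=
    (summable_geometric_of_lt_one hq0 hq).mul_left K
  have htsum : ∑' t : ℕ, ENNReal.ofReal (K * (g / y) ^ t)
      = ENNReal.ofReal (K * (1 - g / y)⁻¹) := by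
    rw [← ENNReal.ofReal_tsum_of_nonneg (fun t => by positivity) hsummable]
    congr 1
    rw [tsum_mul_left, tsum_geometric_of_lt_one hq0 hq]
  have hfinal : μ (kAccessibleEvent k n h) ≤ ENNReal.ofReal (K * (1 - g / y)⁻¹) := by
    rw [← htsum]
    exact le_trans hbound (ENNReal.tsum_le_tsum hterm)
  have h1q : 0 < 1 - g / y := by linarith
  calc theta k n h = (μ (kAccessibleEvent k n h)).toReal := rfl
    _ ≤ (ENNReal.ofReal (K * (1 - g / y)⁻¹)).toReal := ENNReal.toReal_mono ENNReal.ofReal_ne_top hfinal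
    _ = K * (1 - g / y)⁻¹ := ENNReal.toReal_ofReal (by positivity)

lemma main_step (k n h : ℕ) (hk : 0 < k) (c C : ℝ) (hC : 0 < C) (hh1 : 1 ≤ h)
    (hn : (n : ℝ) ≤ ((h : ℝ) / (Real.exp 1 * k)) ^ ((1 : ℝ) / k) - C * (h : ℝ) ^ c)
    (hε : 4 * ((k : ℝ) / (h : ℝ)) ^ ((1 : ℝ) / k) + 1 / (h : ℝ) ≤ 1 / 2)
    (hρ : 2 ≤ (((h : ℝ) / k) * (1 - (4 * ((k : ℝ) / (h : ℝ)) ^ ((1 : ℝ) / k) + 1 / (h : ℝ))))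
        ^ ((1 : ℝ) / k)) :
    theta k n h ≤ (k : ℝ) * Real.exp (2 * (4 * ((k : ℝ) / (h : ℝ)) ^ ((1 : ℝ) / k) + 1 / (h : ℝ))
        * ((h : ℝ) / k) - C * (h : ℝ) ^ c / (((h : ℝ) / (Real.exp 1 * k)) ^ ((1 : ℝ) / k)) * (h : ℝ)) := by
  have hk' : (0 : ℝ) < k := by exact_mod_cast hk
  have hk1 : (1 : ℝ) ≤ k := by exact_mod_cast hk
  set x : ℝ := (h : ℝ) with hx
  have hx1 : (1 : ℝ) ≤ x := by rw [hx]; exact_mod_cast hh1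
  have hx0 : (0 : ℝ) < x := lt_of_lt_of_le zero_lt_one hx1
  set ε : ℝ := 4 * ((k : ℝ) / x) ^ ((1 : ℝ) / k) + 1 / x with hεdef
  set ρ : ℝ := ((x / k) * (1 - ε)) ^ ((1 : ℝ) / k) with hρdef
  set y : ℝ := x / k with hydef
  set A : ℝ := (x / (Real.exp 1 * k)) ^ ((1 : ℝ) / k) with hAdef
  have hy0 : 0 < y := by positivity
  have hε0 : 0 < ε := by positivity
  have hε2 : ε ≤ 1 / 2 := hε
  have h1ε : (1 : ℝ) / 2 ≤ 1 - ε := by linarith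
  have h1ε0 : (0 : ℝ) < 1 - ε := lt_of_lt_of_le (by norm_num) h1ε
  have hbase0 : (0 : ℝ) ≤ (x / k) * (1 - ε) := mul_nonneg (by positivity) (le_of_lt h1ε0)
  have hρ0 : (0 : ℝ) < ρ := lt_of_lt_of_le zero_lt_two hρ
  have hρ1 : (1 : ℝ) ≤ ρ := le_trans one_le_two hρ
  have hkR : ((1 : ℝ) / k) * (k : ℕ) = 1 := by field_simp
  have hρk : ρ ^ (k : ℕ) = y * (1 - ε) := by
    rw [hρdef, ← Real.rpow_natCast (((x / k) * (1 - ε)) ^ ((1 : ℝ) / k)) k,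
      ← Real.rpow_mul hbase0, hkR, Real.rpow_one]
  set g : ℝ := ∑ j : Fin k, ρ ^ (j.val + 1) with hgdef
  have hρne1 : ρ ≠ 1 := by intro hcon; rw [hcon] at hρ; norm_num at hρ
  have hgeq : g = ρ * ((ρ ^ (k : ℕ) - 1) / (ρ - 1)) := by
    rw [hgdef, Fin.sum_univ_eq_sum_range (fun j => ρ ^ (j + 1)) k]
    rw [← geom_sum_eq hρne1 k, Finset.mul_sum]
    apply Finset.sum_congr rfl
    intro i _
    rw [pow_succ]
    ring
  have hP1 : (1 : ℝ) ≤ ρ ^ (k : ℕ) := by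
    calc (1 : ℝ) = 1 ^ (k : ℕ) := (one_pow _).symm
    _ ≤ ρ ^ (k : ℕ) := pow_le_pow_left₀ zero_le_one hρ1 k
  have hρsplit : ρ = (x / k) ^ ((1 : ℝ) / k) * (1 - ε) ^ ((1 : ℝ) / k) := by
    rw [hρdef, Real.mul_rpow (by positivity) (le_of_lt h1ε0)]
  have hhalf : (1 : ℝ) / 2 ≤ (1 - ε) ^ ((1 : ℝ) / k) := by
    calc (1 : ℝ) / 2 = (1 / 2 : ℝ) ^ (1 : ℝ) := by rw [Real.rpow_one]
    _ ≤ (1 / 2 : ℝ) ^ ((1 : ℝ) / k) := by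
        apply Real.rpow_le_rpow_of_exponent_ge (by norm_num) (by norm_num)
        rw [div_le_one hk']; exact hk1
    _ ≤ (1 - ε) ^ ((1 : ℝ) / k) := by
        apply Real.rpow_le_rpow (by norm_num) h1ε (by positivity)
  have hxk0 : (0 : ℝ) < (x / k) ^ ((1 : ℝ) / k) := by positivity
  have hρge : (x / k) ^ ((1 : ℝ) / k) * (1 / 2) ≤ ρ := by
    rw [hρsplit]
    exact mul_le_mul_of_nonneg_left hhalf (le_of_lt hxk0)
  have hinvrel : ((x / k) ^ ((1 : ℝ) / k))⁻¹ = ((k : ℝ) / x) ^ ((1 : ℝ) / k) := by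
    rw [← Real.inv_rpow (by positivity)]
    congr 1
    field_simp
  have h2ρ : 2 / ρ ≤ 4 * ((k : ℝ) / x) ^ ((1 : ℝ) / k) := by
    calc 2 / ρ ≤ 2 / ((x / k) ^ ((1 : ℝ) / k) * (1 / 2)) :=
        div_le_div_of_nonneg_left (by norm_num) (by positivity) hρge
    _ = 4 * ((x / k) ^ ((1 : ℝ) / k))⁻¹ := by field_simp; ring
    _ = 4 * ((k : ℝ) / x) ^ ((1 : ℝ) / k) := by rw [hinvrel]
  -- auxiliary facts about A, E, Dd established before clearing values
  have hA0 : 0 < A := by rw [hAdef]; positivity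
  set E : ℝ := Real.exp ((1 : ℝ) / k) with hEdef
  have hE0 : 0 < E := Real.exp_pos _
  set Dd : ℝ := (1 - ε) ^ ((1 : ℝ) / k) with hDdef
  have hDd0 : 0 < Dd := Real.rpow_pos_of_pos h1ε0 _
  have hxkA : (x / k) ^ ((1 : ℝ) / k) = A * E := by
    rw [hAdef, hEdef]
    rw [show x / (k : ℝ) = (x / (Real.exp 1 * k)) * Real.exp 1 by
      field_simp]
    rw [Real.mul_rpow (by positivity) (Real.exp_pos 1).le]
    congr 1
    rw [← Real.exp_mul, one_mul]
  have hρ_eq : ρ = A * E * Dd := by rw [hρsplit, hxkA, hDdef]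
  have hεlb : 2 / ρ + 1 / x ≤ ε := by
    rw [hεdef]
    linarith [h2ρ]
  have hn' : (n : ℝ) ≤ A - C * x ^ c := hn
  clear_value x ε ρ y A E Dd
  clear hεdef hρdef hAdef hρsplit hxkA hinvrel hxk0 hhalf hρge hρ0
  subst hydef
  have hDdpow : (Dd⁻¹ : ℝ) ^ (h : ℕ) ≤ Real.exp (2 * ε * (x / k)) := by
    have hinv1 : Dd⁻¹ = ((1 - ε)⁻¹) ^ ((1 : ℝ) / k) := by
      rw [hDdef, ← Real.inv_rpow h1ε0.le]
    have hinvb : (1 - ε)⁻¹ ≤ Real.exp (2 * ε) := by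
      have hstep : (1 - ε) * (2 * ε + 1) ≤ (1 - ε) * Real.exp (2 * ε) :=
        mul_le_mul_of_nonneg_left (Real.add_one_le_exp (2 * ε)) h1ε0.le
      have hquad : (0 : ℝ) ≤ ε * (1 - 2 * ε) := mul_nonneg hε0.le (by linarith)
      have hkey : 1 ≤ (1 - ε) * Real.exp (2 * ε) := by nlinarith [hstep, hquad]
      rw [inv_eq_one_div, div_le_iff₀ h1ε0]
      nlinarith [hkey]
    have e1 : (Dd⁻¹ : ℝ) ^ (h : ℕ) = ((1 - ε)⁻¹) ^ (((1 : ℝ) / k) * (h : ℕ)) := by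
      rw [hinv1, ← Real.rpow_natCast (((1 - ε)⁻¹) ^ ((1 : ℝ) / k)) h,
        ← Real.rpow_mul (inv_nonneg.mpr h1ε0.le)]
    rw [e1]
    calc ((1 - ε)⁻¹) ^ (((1 : ℝ) / k) * (h : ℕ))
        ≤ (Real.exp (2 * ε)) ^ (((1 : ℝ) / k) * (h : ℕ)) := by
          apply Real.rpow_le_rpow (inv_nonneg.mpr h1ε0.le) hinvb (by positivity)
    _ = Real.exp (2 * ε * (((1 : ℝ) / k) * (h : ℕ))) := (Real.exp_mul _ _).symm
    _ = Real.exp (2 * ε * (x / k)) := by rw [← hx]; ring_nf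
  have hρ0 : (0 : ℝ) < ρ := lt_of_lt_of_le zero_lt_two hρ
  have hn0 : (0 : ℝ) ≤ (n : ℝ) := Nat.cast_nonneg n
  have hgle : g ≤ ρ ^ (k : ℕ) * (1 + 2 / ρ) := by
    rw [hgeq, mul_div_assoc']
    rw [div_le_iff₀ (by linarith : (0 : ℝ) < ρ - 1)]
    have expand : ρ ^ (k : ℕ) * (1 + 2 / ρ) * (ρ - 1)
        = ρ ^ (k : ℕ) * ((ρ + 2) * (ρ - 1)) / ρ := by
      field_simp
    rw [expand, le_div_iff₀ hρ0]
    generalize hgen : ρ ^ (k : ℕ) = P at hP1 ⊢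
    nlinarith [mul_nonneg (le_trans zero_le_one hP1) (by linarith : (0 : ℝ) ≤ ρ - 2),
      mul_pos hρ0 hρ0]
  have hq_le : g / (x / k) ≤ 1 - 1 / x := by
    have step1 : g / (x / k) ≤ (1 - ε) * (1 + 2 / ρ) := by
      rw [div_le_iff₀ hy0]
      calc g ≤ ρ ^ (k : ℕ) * (1 + 2 / ρ) := hgle
      _ = (x / k) * (1 - ε) * (1 + 2 / ρ) := by rw [hρk]
      _ = (1 - ε) * (1 + 2 / ρ) * (x / k) := by ring
    have h2ρ0 : (0 : ℝ) ≤ 2 / ρ := div_nonneg (by norm_num) hρ0.le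
    nlinarith [hε0, h2ρ0, hεlb, step1, h1ε0]
  have h1x0 : (0 : ℝ) < 1 / x := by positivity
  have hq1 : g / (x / k) < 1 := lt_of_le_of_lt hq_le (by linarith)
  have hbase := theta_le_bound k n h hk ρ (x / k) hρ1 hy0
    (by rw [hgdef] at hq1; exact hq1)
  rw [← hgdef] at hbase
  -- the quantity s
  set s : ℝ := C * x ^ c / A with hsdef
  have hxc0 : (0 : ℝ) ≤ x ^ c := Real.rpow_nonneg hx0.le c
  have hs0 : (0 : ℝ) ≤ s := div_nonneg (mul_nonneg hC.le hxc0) hA0.le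
  have hs1 : s ≤ 1 := by
    rw [hsdef, div_le_one hA0]
    linarith [hn', hn0]
  have hAs : A - C * x ^ c = A * (1 - s) := by
    rw [hsdef]
    field_simp
  have hnρ : (n : ℝ) / ρ ≤ (1 - s) * E⁻¹ * Dd⁻¹ := by
    have h1 : (n : ℝ) / ρ ≤ (A - C * x ^ c) / ρ := (div_le_div_iff_of_pos_right hρ0).mpr hn'
    have h2 : (A - C * x ^ c) / ρ = (1 - s) * E⁻¹ * Dd⁻¹ := by
      rw [hAs, hρ_eq]
      field_simp
    rw [h2] at h1
    exact h1
  have hfrac0 : (0 : ℝ) ≤ (1 - s) * E⁻¹ * Dd⁻¹ :=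
    mul_nonneg (mul_nonneg (by linarith) (inv_nonneg.mpr hE0.le)) (inv_nonneg.mpr hDd0.le)
  have hpowle : (n : ℝ) ^ h * ρ⁻¹ ^ h ≤ (1 - s) ^ h * (E⁻¹) ^ h * (Dd⁻¹) ^ h := by
    have e1 : (n : ℝ) ^ h * ρ⁻¹ ^ h = ((n : ℝ) / ρ) ^ h := by
      rw [div_eq_mul_inv, mul_pow]
    rw [e1, ← mul_pow, ← mul_pow]
    exact pow_le_pow_left₀ (div_nonneg hn0 hρ0.le) hnρ h
  have hqinv : (1 - g / (x / k))⁻¹ ≤ x := by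
    have h1 : 1 / x ≤ 1 - g / (x / k) := by linarith [hq_le]
    have h2 : (1 - g / (x / k))⁻¹ ≤ (1 / x)⁻¹ := inv_anti₀ h1x0 h1
    rwa [one_div, inv_inv] at h2
  have hEinvpow : (E⁻¹ : ℝ) ^ (h : ℕ) = Real.exp (-(x / k)) := by
    rw [show E⁻¹ = Real.exp (-((1:ℝ)/k)) by rw [hEdef, Real.exp_neg]]
    rw [← Real.exp_nat_mul]
    congr 1
    rw [hx]
    ring
  have h1spow : (1 - s) ^ (h : ℕ) ≤ Real.exp (-(s * x)) := by
    have h1 : 1 - s ≤ Real.exp (-s) := by nlinarith [Real.add_one_le_exp (-s)]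
    calc (1 - s) ^ (h : ℕ) ≤ (Real.exp (-s)) ^ (h : ℕ) :=
        pow_le_pow_left₀ (by linarith) h1 h
    _ = Real.exp (-(s * x)) := by
        rw [← Real.exp_nat_mul]
        congr 1
        rw [hx]
        ring
  have hyx : Real.exp (x / k) / (x / k) * x = Real.exp (x / k) * k := by
    field_simp
  have hexpy0 : (0 : ℝ) ≤ Real.exp (x / k) / (x / k) :=
    div_nonneg (Real.exp_pos _).le hy0.le
  have hDdp0 : (0 : ℝ) ≤ (Dd⁻¹ : ℝ) ^ (h : ℕ) := pow_nonneg (inv_nonneg.mpr hDd0.le) h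
  have hg0' : (0 : ℝ) ≤ (1 - g / (x / k))⁻¹ := inv_nonneg.mpr (by linarith [hq_le])
  calc theta k n h
      ≤ (n : ℝ) ^ h * ρ⁻¹ ^ h * (Real.exp (x / k) / (x / k)) * (1 - g / (x / k))⁻¹ := hbase
    _ ≤ ((1 - s) ^ h * (E⁻¹) ^ h * (Dd⁻¹) ^ h) * (Real.exp (x / k) / (x / k)) * x := by
        apply mul_le_mul _ hqinv hg0' _
        · exact mul_le_mul_of_nonneg_right hpowle hexpy0
        · exact mul_nonneg (mul_nonneg (mul_nonneg (pow_nonneg (by linarith) h)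
            (pow_nonneg (inv_nonneg.mpr hE0.le) h)) hDdp0) hexpy0
    _ ≤ (Real.exp (-(s * x)) * Real.exp (-(x / k)) * Real.exp (2 * ε * (x / k)))
          * (Real.exp (x / k) / (x / k)) * x := by
        apply mul_le_mul_of_nonneg_right _ hx0.le
        apply mul_le_mul_of_nonneg_right _ hexpy0
        rw [hEinvpow]
        apply mul_le_mul _ hDdpow hDdp0 _
        · exact mul_le_mul_of_nonneg_right h1spow (Real.exp_pos _).le
        · positivity
    _ = (k : ℝ) * Real.exp (2 * ε * (x / k) - C * x ^ c / A * x) := by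
        have e2 : (Real.exp (-(s * x)) * Real.exp (-(x / k)) * Real.exp (2 * ε * (x / k)))
              * (Real.exp (x / k) / (x / k)) * x
            = (Real.exp (-(s * x)) * Real.exp (-(x / k)) * Real.exp (2 * ε * (x / k))
                * Real.exp (x / k)) * k := by
          rw [mul_assoc _ (Real.exp (x / k) / (x / k)) x, hyx]
          ring
        rw [e2, ← Real.exp_add, ← Real.exp_add, ← Real.exp_add]
        rw [show -(s * x) + -(x / k) + 2 * ε * (x / k) + x / k
            = 2 * ε * (x / k) - s * x by ring, hsdef]
        ring

theorem theta_tendsto_zero_of_kth_root_minus_power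
    (k : ℕ) (hk : 0 < k) (f : ℕ → ℕ) (c C : ℝ) (hc : 0 < c) (hC : 0 < C)
    (hf : ∀ᶠ h : ℕ in atTop,
      (f h : ℝ) ≤ ((h : ℝ) / (Real.exp 1 * k)) ^ ((1 : ℝ) / k) - C * (h : ℝ) ^ c) :
    Tendsto (fun h : ℕ => theta k (f h) h) atTop (nhds 0) := by
  have hk' : (0 : ℝ) < k := by exact_mod_cast hk
  have hk1 : (1 : ℝ) ≤ k := by exact_mod_cast hk
  set εf : ℕ → ℝ := fun h => 4 * ((k : ℝ) / (h : ℝ)) ^ ((1 : ℝ) / k) + 1 / (h : ℝ) with hεf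
  set uf : ℕ → ℝ := fun h => 2 * εf h * ((h : ℝ) / k)
      - C * (h : ℝ) ^ c / (((h : ℝ) / (Real.exp 1 * k)) ^ ((1 : ℝ) / k)) * (h : ℝ) with huf
  -- ε tends to 0
  have tend1 : Tendsto εf atTop (nhds 0) := by
    have l1 : Tendsto (fun h : ℕ => (k : ℝ) / (h : ℝ)) atTop (nhds 0) :=
      tendsto_const_div_atTop_nhds_zero_nat (k : ℝ)
    have hcont : ContinuousAt (fun z : ℝ => z ^ ((1 : ℝ) / k)) 0 :=
      Real.continuousAt_rpow_const 0 ((1 : ℝ) / k) (Or.inr (by positivity))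
    have l2 : Tendsto (fun h : ℕ => ((k : ℝ) / (h : ℝ)) ^ ((1 : ℝ) / k)) atTop (nhds 0) := by
      have hne : ((k : ℝ))⁻¹ ≠ 0 := by positivity
      have := hcont.tendsto.comp l1
      simpa [Function.comp_def, Real.zero_rpow hne] using this
    have l3 : Tendsto (fun h : ℕ => 1 / (h : ℝ)) atTop (nhds 0) :=
      tendsto_one_div_atTop_nhds_zero_nat
    have := (l2.const_mul (4 : ℝ)).add l3
    simpa [hεf] using this
  have hεev : ∀ᶠ h : ℕ in atTop, εf h ≤ 1 / 2 :=
    (tend1.eventually_lt_const (by norm_num : (0:ℝ) < 1/2)).mono fun h hh => le_of_lt hh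
  -- ρ tends to infinity
  have tendρ : Tendsto (fun h : ℕ =>
      (((h : ℝ) / k) * (1 - εf h)) ^ ((1 : ℝ) / k)) atTop atTop := by
    have inner2 : Tendsto (fun h : ℕ => (h : ℝ) / (2 * k)) atTop atTop :=
      Tendsto.atTop_div_const (by positivity) tendsto_natCast_atTop_atTop
    have hinner : Tendsto (fun h : ℕ => ((h : ℝ) / k) * (1 - εf h)) atTop atTop := by
      apply tendsto_atTop_mono' atTop _ inner2
      filter_upwards [hεev] with h hh
      have hh0 : (0 : ℝ) ≤ (h : ℝ) / k := by positivity
      calc (h : ℝ) / (2 * k) = ((h : ℝ) / k) * (1 / 2) := by ring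
      _ ≤ ((h : ℝ) / k) * (1 - εf h) := by
          apply mul_le_mul_of_nonneg_left _ hh0
          linarith
    exact (tendsto_rpow_atTop (by positivity : (0 : ℝ) < (1 : ℝ) / k)).comp hinner
  have hρev : ∀ᶠ h : ℕ in atTop,
      2 ≤ (((h : ℝ) / k) * (1 - εf h)) ^ ((1 : ℝ) / k) := tendρ.eventually_ge_atTop 2
  -- u tends to -infinity
  have tendu : Tendsto uf atTop atBot := by
    set a1 : ℝ := (8 / k) * (k : ℝ) ^ ((1 : ℝ) / k) with ha1
    set b : ℝ := C * (Real.exp 1 * k) ^ ((1 : ℝ) / k) with hb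
    have hb0 : 0 < b := by positivity
    -- the comparison function
    have tendcmp : Tendsto (fun h : ℕ => a1 - b * (h : ℝ) ^ c + 2 / k) atTop atBot := by
      have hxc : Tendsto (fun h : ℕ => (h : ℝ) ^ c) atTop atTop :=
        (tendsto_rpow_atTop hc).comp tendsto_natCast_atTop_atTop
      have h2 : Tendsto (fun h : ℕ => b * (h : ℝ) ^ c) atTop atTop :=
        hxc.const_mul_atTop hb0
      have h3 : Tendsto (fun h : ℕ => -(b * (h : ℝ) ^ c)) atTop atBot :=
        tendsto_neg_atTop_atBot.comp h2
      have h4 : Tendsto (fun h : ℕ => a1 + -(b * (h : ℝ) ^ c)) atTop atBot :=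
        tendsto_atBot_add_const_left atTop a1 h3
      have h5 : Tendsto (fun h : ℕ => (a1 + -(b * (h : ℝ) ^ c)) + (2 : ℝ) / k) atTop atBot :=
        tendsto_atBot_add_const_right atTop ((2 : ℝ) / k) h4
      have h7 : (fun h : ℕ => a1 - b * (h : ℝ) ^ c + 2 / k)
          = fun h : ℕ => (a1 + -(b * (h : ℝ) ^ c)) + (2 : ℝ) / k := by
        funext h
        ring
      rw [h7]
      exact h5
    apply tendsto_atBot_mono' atTop _ tendcmp
    have hevneg : ∀ᶠ h : ℕ in atTop, a1 - b * (h : ℝ) ^ c ≤ 0 := by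
      have h6 : Tendsto (fun h : ℕ => a1 + -(b * (h : ℝ) ^ c)) atTop atBot :=
        tendsto_atBot_add_const_left atTop a1
          (tendsto_neg_atTop_atBot.comp
            (((tendsto_rpow_atTop hc).comp tendsto_natCast_atTop_atTop).const_mul_atTop hb0))
      filter_upwards [h6.eventually_le_atBot 0] with h hh
      linarith
    filter_upwards [eventually_ge_atTop 1, hevneg] with h hh1 hneg
    have hx1 : (1 : ℝ) ≤ (h : ℝ) := by exact_mod_cast hh1
    have hx0 : (0 : ℝ) < (h : ℝ) := by linarith
    -- rewrite uf h explicitly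
    have e1 : ((k : ℝ) / (h : ℝ)) ^ ((1 : ℝ) / k) * (h : ℝ)
        = (k : ℝ) ^ ((1 : ℝ) / k) * (h : ℝ) ^ (1 - (1 : ℝ) / k) := by
      rw [Real.div_rpow (by positivity) (by positivity)]
      rw [show (h : ℝ) ^ (1 - (1 : ℝ) / k) = (h : ℝ) ^ (1 : ℝ) / (h : ℝ) ^ ((1 : ℝ) / k) by
        rw [← Real.rpow_sub hx0], Real.rpow_one]
      field_simp
    have e2 : C * (h : ℝ) ^ c / (((h : ℝ) / (Real.exp 1 * k)) ^ ((1 : ℝ) / k)) * (h : ℝ)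
        = b * (h : ℝ) ^ (c + 1 - (1 : ℝ) / k) := by
      rw [hb, Real.div_rpow (by positivity) (by positivity)]
      rw [show (h : ℝ) ^ (c + 1 - (1 : ℝ) / k)
          = (h : ℝ) ^ c * (h : ℝ) ^ (1 : ℝ) / (h : ℝ) ^ ((1 : ℝ) / k) by
        rw [← Real.rpow_add hx0, ← Real.rpow_sub hx0], Real.rpow_one]
      have hpos : (0 : ℝ) < (h : ℝ) ^ ((1 : ℝ) / k) := by positivity
      have hpos2 : (0 : ℝ) < ((Real.exp 1 * k) : ℝ) ^ ((1 : ℝ) / k) := by positivity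
      field_simp
    have euf : uf h = (h : ℝ) ^ (1 - (1 : ℝ) / k) * (a1 - b * (h : ℝ) ^ c) + 2 / k := by
      rw [huf, hεf, ha1]
      simp only []
      rw [show 2 * (4 * ((k : ℝ) / (h : ℝ)) ^ ((1 : ℝ) / k) + 1 / (h : ℝ)) * ((h : ℝ) / k)
          = (8 / k) * (((k : ℝ) / (h : ℝ)) ^ ((1 : ℝ) / k) * (h : ℝ)) + (2 / k) * (1 / (h : ℝ) * (h : ℝ)) by ring]
      rw [e1, e2]
      rw [show 1 / (h : ℝ) * (h : ℝ) = 1 by field_simp]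
      rw [show (h : ℝ) ^ (c + 1 - (1 : ℝ) / k) = (h : ℝ) ^ (1 - (1 : ℝ) / k) * (h : ℝ) ^ c by
        rw [← Real.rpow_add hx0]; ring_nf]
      ring
    rw [euf]
    have hone : (1 : ℝ) ≤ (h : ℝ) ^ (1 - (1 : ℝ) / k) := by
      apply Real.one_le_rpow hx1
      have : (1 : ℝ) / k ≤ 1 := by rw [div_le_one hk']; exact hk1
      linarith
    nlinarith [hone, hneg]
  -- conclude
  have hbound : ∀ᶠ h : ℕ in atTop, theta k (f h) h ≤ (k : ℝ) * Real.exp (uf h) := by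
    filter_upwards [hf, eventually_ge_atTop 1, hεev, hρev] with h hfh hh1 hεh hρh
    exact main_step k (f h) h hk c C hC hh1 hfh hεh hρh
  have htend0 : Tendsto (fun h : ℕ => (k : ℝ) * Real.exp (uf h)) atTop (nhds 0) := by
    have := (Real.tendsto_exp_atBot.comp tendu).const_mul (k : ℝ)
    simpa using this
  exact squeeze_zero' (Eventually.of_forall fun h => ENNReal.toReal_nonneg) hbound htend0
end

section
/- Let k be a positive integer, let c be a real constant with 0 < c < 1, and let f : ℕ → ℕ satisfy f(h) ≤ c·(h/(e·k))^{1/k} for all sufficiently large h. Then θ_k(f(h), h) → 0 as h → ∞. -/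
open MeasureTheory Filter
open ENNReal

section Core
variable {ι : Type*} [Fintype ι] [DecidableEq ι] {ν : Measure ℝ} [IsProbabilityMeasure ν]

lemma strictMono_perm_eq_one {N : ℕ} (ρ : Equiv.Perm (Fin N)) (hρ : StrictMono ρ) : ρ = 1 := by
  have h1 : Set.range (⇑ρ) = Set.range (id : Fin N → Fin N) := by
    simp [Set.range_id, Set.range_eq_univ.mpr ρ.surjective]
  haveI : WellFoundedLT (Fin N) := inferInstance
  have h2 : (⇑ρ) = (id : Fin N → Fin N) := Set.range_injOn_strictMono hρ strictMono_id h1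
  ext i
  exact congrArg Fin.val (congrFun h2 i)

lemma measure_pi_strictMono_le {N : ℕ} {g : Fin N → ι} (hg : Function.Injective g) :
    Measure.pi (fun _ : ι => ν) {ω | StrictMono fun i => ω (g i)} ≤ (N.factorial : ℝ≥0∞)⁻¹ := by
  classical
  set μ : Measure (ι → ℝ) := Measure.pi (fun _ : ι => ν) with hμ
  set T : Equiv.Perm (Fin N) → Set (ι → ℝ) :=
    fun σ => {ω | StrictMono fun i => ω (g (σ i))} with hT
  have hmeas : ∀ σ, MeasurableSet (T σ) := by
    intro σ
    have : T σ = ⋂ (i : Fin N) (j : Fin N) (_ : i < j),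
        {ω : ι → ℝ | ω (g (σ i)) < ω (g (σ j))} := by
      ext ω
      simp only [hT, Set.mem_setOf_eq, Set.mem_iInter, StrictMono]
    rw [this]
    refine MeasurableSet.iInter fun i => MeasurableSet.iInter fun j =>
      MeasurableSet.iInter fun _ => ?_
    exact measurableSet_lt (measurable_pi_apply _) (measurable_pi_apply _)
  -- equal measures
  have hsame : ∀ σ, μ (T σ) = μ (T 1) := by
    intro σ
    set π : Equiv.Perm ι := σ.viaFintypeEmbedding ⟨g, hg⟩ with hπ
    have hπg : ∀ i, π (g i) = g (σ i) := fun i =>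
      Equiv.Perm.viaFintypeEmbedding_apply_image σ ⟨g, hg⟩ i
    clear_value π
    set Φ := MeasurableEquiv.piCongrLeft (fun _ : ι => ℝ) π.symm with hΦ
    have hmp : MeasurePreserving Φ μ μ := measurePreserving_piCongrLeft (fun _ : ι => ν) π.symm
    have happ : ∀ (ω : ι → ℝ) (j : ι), Φ ω (π.symm j) = ω j := fun ω j =>
      MeasurableEquiv.piCongrLeft_apply_apply (β := fun _ : ι => ℝ) π.symm ω j
    clear_value Φ
    have hpre : ⇑Φ ⁻¹' (T 1) = T σ := by
      ext ω
      have hfun : (fun i => Φ ω (g i)) = fun i => ω (g (σ i)) := by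
        funext i
        have h1 : Φ ω (π.symm (π (g i))) = ω (π (g i)) := happ ω (π (g i))
        rw [Equiv.symm_apply_apply] at h1
        rw [h1, hπg i]
      simp only [Set.mem_preimage, hT, Set.mem_setOf_eq, Equiv.Perm.one_apply, hfun]
    calc μ (T σ) = μ (⇑Φ ⁻¹' (T 1)) := by rw [hpre]
      _ = μ (T 1) := hmp.measure_preimage (hmeas 1).nullMeasurableSet
  -- disjointness
  have hdisj : Set.PairwiseDisjoint (Set.univ : Set (Equiv.Perm (Fin N))) T := by
    intro σ _ τ _ hne
    refine Set.disjoint_left.2 fun ω hσ hτ => hne ?_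
    have hσ' : StrictMono fun i => ω (g (σ i)) := hσ
    have hτ' : StrictMono fun i => ω (g (τ i)) := hτ
    set ρ : Equiv.Perm (Fin N) := σ⁻¹ * τ with hρdef
    have hcomp : ∀ i, σ (ρ i) = τ i := by
      intro i; simp [hρdef]
    have hρmono : StrictMono ρ := by
      intro a b hab
      have hlt : ω (g (σ (ρ a))) < ω (g (σ (ρ b))) := by
        rw [hcomp a, hcomp b]; exact hτ' hab
      by_contra hle
      push_neg at hle
      rcases lt_or_eq_of_le hle with h' | h'
      · exact absurd (hσ' h') (not_lt.2 hlt.le)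
      · rw [h'] at hlt; exact lt_irrefl _ hlt
    have h1 : ρ = 1 := strictMono_perm_eq_one ρ hρmono
    have : σ⁻¹ * τ = 1 := by rw [← hρdef, h1]
    exact (inv_mul_eq_one.mp this)
  -- sum
  have hsum : ∑ σ : Equiv.Perm (Fin N), μ (T σ) ≤ 1 := by
    rw [← measure_biUnion_finset (by simpa using hdisj) (fun σ _ => hmeas σ)]
    exact prob_le_one
  have hcard : (Finset.univ : Finset (Equiv.Perm (Fin N))).card = N.factorial := by
    simp [Finset.card_univ, Fintype.card_perm]
  have hkey : (N.factorial : ℝ≥0∞) * μ (T 1) ≤ 1 := by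
    calc (N.factorial : ℝ≥0∞) * μ (T 1) = ∑ σ : Equiv.Perm (Fin N), μ (T σ) := by
          rw [Finset.sum_congr rfl fun σ _ => hsame σ, Finset.sum_const, hcard, nsmul_eq_mul]
      _ ≤ 1 := hsum
  have hfin : μ {ω | StrictMono fun i => ω (g i)} = μ (T 1) := by
    congr 1
  rw [hfin]
  have hne0 : (N.factorial : ℝ≥0∞) ≠ 0 := by
    simp [Nat.factorial_ne_zero]
  calc μ (T 1) = (N.factorial : ℝ≥0∞)⁻¹ * ((N.factorial : ℝ≥0∞) * μ (T 1)) := by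
        rw [← mul_assoc, ENNReal.inv_mul_cancel hne0 (by simp), one_mul]
    _ ≤ (N.factorial : ℝ≥0∞)⁻¹ * 1 := mul_le_mul_right hkey _
    _ = (N.factorial : ℝ≥0∞)⁻¹ := mul_one _

end Core




/-- Validity of an index sequence. -/
def ValidSeq (k h t : ℕ) (r : Fin (t + 1) → Fin (h + 1)) : Prop :=
  StrictMono r ∧ r 0 = 0 ∧ r (Fin.last t) = Fin.last h ∧
    ∀ i : Fin t, (r i.succ).val ≤ (r i.castSucc).val + k

namespace ValidSeq

variable {k h t : ℕ} {r : Fin (t + 1) → Fin (h + 1)}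

/-- gaps -/
def gap (r : Fin (t + 1) → Fin (h + 1)) (i : Fin t) : ℕ :=
  (r i.succ).val - (r i.castSucc).val

lemma gap_pos (hr : ValidSeq k h t r) (i : Fin t) : 0 < gap r i := by
  have := hr.1 (Fin.castSucc_lt_succ (i := i))
  simp only [gap]
  omega

lemma gap_le (hr : ValidSeq k h t r) (i : Fin t) : gap r i ≤ k := by
  have := hr.2.2.2 i
  simp only [gap]
  omega

lemma val_succ (hr : ValidSeq k h t r) (i : Fin t) :
    (r i.succ).val = (r i.castSucc).val + gap r i := by
  have := hr.1 (Fin.castSucc_lt_succ (i := i))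
  simp only [gap]
  omega

lemma sum_gap (hr : ValidSeq k h t r) : ∑ i : Fin t, gap r i = h := by
  classical
  set G : ℕ → ℕ := fun i => if hi : i < t then gap r ⟨i, hi⟩ else 0 with hG
  have key : ∀ j : ℕ, ∀ hj : j ≤ t, ∑ i ∈ Finset.range j, G i = (r ⟨j, Nat.lt_succ_of_le hj⟩).val := by
    intro j hj
    induction j with
    | zero =>
      have h0 : (⟨0, Nat.lt_succ_of_le hj⟩ : Fin (t+1)) = 0 := by
        ext; simp
      rw [h0, hr.2.1]
      simp
    | succ j ih =>
      rw [Finset.sum_range_succ, ih (by omega)]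
      have h4 := val_succ hr ⟨j, by omega⟩
      have h5 : G j = gap r ⟨j, by omega⟩ := by simp [hG, Nat.lt_of_succ_le hj]
      simp only [Fin.succ, Fin.castSucc, Fin.castAdd, Fin.castLE] at h4
      omega
  have h2 := key t le_rfl
  have h3 : (⟨t, by omega⟩ : Fin (t+1)) = Fin.last t := rfl
  rw [h3, hr.2.2.1] at h2
  have h6 : ∑ i : Fin t, gap r i = ∑ i ∈ Finset.range t, G i := by
    rw [← Fin.sum_univ_eq_sum_range G t]
    exact Finset.sum_congr rfl fun i _ => by simp [hG, i.isLt]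
  rw [h6, h2, Fin.val_last]



lemma sum_def (hr : ValidSeq k h t r) :
    h ≤ k * t ∧ (∑ i : Fin t, (k - gap r i)) = k * t - h := by
  have h1 : (∑ i : Fin t, (k - gap r i)) + (∑ i : Fin t, gap r i) = k * t := by
    rw [← Finset.sum_add_distrib]
    have : ∀ i : Fin t, (k - gap r i) + gap r i = k := fun i => by
      have := gap_le hr i; omega
    rw [Finset.sum_congr rfl fun i _ => this i]
    simp [Finset.sum_const, mul_comm]
  have h2 := sum_gap hr
  omega

lemma eq_of_gap (hr : ValidSeq k h t r) {r' : Fin (t+1) → Fin (h+1)} (hr' : ValidSeq k h t r')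
    (hgap : ∀ i, gap r i = gap r' i) : r = r' := by
  classical
  funext j
  ext
  set G : ℕ → ℕ := fun i => if hi : i < t then gap r ⟨i, hi⟩ else 0 with hG
  set G' : ℕ → ℕ := fun i => if hi : i < t then gap r' ⟨i, hi⟩ else 0 with hG'
  have key : ∀ (s : Fin (t+1) → Fin (h+1)), ValidSeq k h t s →
      ∀ j : ℕ, ∀ hj : j ≤ t, (s ⟨j, Nat.lt_succ_of_le hj⟩).val =
        ∑ i ∈ Finset.range j, (fun i => if hi : i < t then gap s ⟨i, hi⟩ else 0) i := by
    intro s hs j hj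
    induction j with
    | zero =>
      have h0 : (⟨0, Nat.lt_succ_of_le hj⟩ : Fin (t+1)) = 0 := by ext; simp
      rw [h0, hs.2.1]; simp
    | succ j ih =>
      rw [Finset.sum_range_succ, ← ih (by omega)]
      have h4 := val_succ hs ⟨j, by omega⟩
      have h5 : (if hi : j < t then gap s ⟨j, hi⟩ else 0) = gap s ⟨j, by omega⟩ := by
        simp [Nat.lt_of_succ_le hj]
      simp only [Fin.succ, Fin.castSucc, Fin.castAdd, Fin.castLE] at h4
      omega
  have hj' : j.val ≤ t := Nat.lt_succ_iff.mp j.isLt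
  have k1 := key r hr j.val hj'
  have k2 := key r' hr' j.val hj'
  have hGG : ∀ i, (if hi : i < t then gap r ⟨i, hi⟩ else 0)
      = (if hi : i < t then gap r' ⟨i, hi⟩ else 0) := by
    intro i
    by_cases hi : i < t <;> simp [hi, hgap]
  have hmk : (⟨j.val, Nat.lt_succ_of_le hj'⟩ : Fin (t+1)) = j := by ext; rfl
  rw [hmk] at k1 k2
  rw [k1, k2]
  exact Finset.sum_congr rfl fun i _ => hGG i

end ValidSeq

/-- The finset of valid index sequences. -/
noncomputable def validFinset (k h t : ℕ) : Finset (Fin (t + 1) → Fin (h + 1)) :=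
  @Finset.filter _ (fun r => ValidSeq k h t r) (Classical.decPred _) Finset.univ

lemma mem_validFinset {k h t : ℕ} {r : Fin (t+1) → Fin (h+1)} :
    r ∈ validFinset k h t ↔ ValidSeq k h t r := by
  simp [validFinset]

lemma validFinset_eq_empty {k h t : ℕ} (hlt : k * t < h) : validFinset k h t = ∅ := by
  ext r
  simp only [mem_validFinset, Finset.notMem_empty, iff_false]
  intro hr
  exact absurd (hr.sum_def.1) (by omega)

lemma card_validFinset_mul_le {k h t : ℕ} {x : ℝ} (hx0 : 0 < x) (hx1 : x ≤ 1) :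
    ((validFinset k h t).card : ℝ) * x ^ (k * t) ≤
      x ^ h * (∑ j ∈ Finset.range k, x ^ j) ^ t := by
  classical
  set R := validFinset k h t with hR
  set D : (Fin (t+1) → Fin (h+1)) → (Fin t → ℕ) := fun r i => k - ValidSeq.gap r i with hD
  have hterm : ∀ r ∈ R, x ^ (k * t) = x ^ h * ∏ i : Fin t, x ^ (D r i) := by
    intro r hr
    have hv := mem_validFinset.mp hr
    have hs := hv.sum_def
    rw [Finset.prod_pow_eq_pow_sum]
    rw [← pow_add]
    congr 1
    simp only [hD]
    omega
  have step1 : ((R.card : ℝ)) * x ^ (k * t) = x ^ h * ∑ r ∈ R, ∏ i : Fin t, x ^ (D r i) := by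
    rw [Finset.mul_sum, ← Finset.sum_congr rfl hterm, Finset.sum_const, nsmul_eq_mul]
  rw [step1]
  refine mul_le_mul_of_nonneg_left ?_ (by positivity)
  have hinj : Set.InjOn D R := by
    intro r hr r' hr' heq
    have hv := mem_validFinset.mp hr
    have hv' := mem_validFinset.mp hr'
    refine ValidSeq.eq_of_gap hv hv' fun i => ?_
    have h1 := congrFun heq i
    have h2 := hv.gap_le i
    have h3 := hv'.gap_le i
    have h4 := hv.gap_pos i
    have h5 := hv'.gap_pos i
    simp only [hD] at h1
    omega
  have himg : ∑ p ∈ R.image D, ∏ i : Fin t, x ^ (p i) = ∑ r ∈ R, ∏ i : Fin t, x ^ (D r i) :=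
    Finset.sum_image (fun r hr r' hr' heq => hinj hr hr' heq)
  rw [← himg]
  have hsub : R.image D ⊆ Fintype.piFinset (fun _ : Fin t => Finset.range k) := by
    intro p hp
    rcases Finset.mem_image.mp hp with ⟨r, hr, rfl⟩
    have hv := mem_validFinset.mp hr
    refine Fintype.mem_piFinset.mpr fun i => Finset.mem_range.mpr ?_
    have h2 := hv.gap_le i
    have h4 := hv.gap_pos i
    simp only [hD]
    omega
  calc ∑ p ∈ R.image D, ∏ i : Fin t, x ^ (p i)
      ≤ ∑ p ∈ Fintype.piFinset (fun _ : Fin t => Finset.range k), ∏ i : Fin t, x ^ (p i) :=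
        Finset.sum_le_sum_of_subset_of_nonneg hsub (fun p _ _ => by positivity)
    _ = (∑ j ∈ Finset.range k, x ^ j) ^ t := by
        rw [← Finset.prod_univ_sum]
        simp


lemma pow_self_le_exp_mul_factorial (m : ℕ) :
    (m : ℝ) ^ m ≤ Real.exp 1 ^ m * m.factorial := by
  induction m with
  | zero => simp
  | succ m ih =>
    have hstep : ((m + 1 : ℕ) : ℝ) ^ m ≤ (m : ℝ) ^ m * Real.exp 1 := by
      rcases Nat.eq_zero_or_pos m with hm | hm
      · subst hm; simpa using Real.one_le_exp (by norm_num)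
      · have hmpos : (0 : ℝ) < m := by exact_mod_cast hm
        have h1 : ((m + 1 : ℕ) : ℝ) = (m : ℝ) * (1 + 1 / m) := by
          field_simp
          push_cast
          ring
        rw [h1, mul_pow]
        refine mul_le_mul_of_nonneg_left ?_ (by positivity)
        have h2 : (1 + 1 / (m:ℝ)) ≤ Real.exp (1 / m) := by
          simpa [add_comm] using Real.add_one_le_exp (1 / (m:ℝ))
        calc (1 + 1 / (m:ℝ)) ^ m ≤ Real.exp (1 / m) ^ m := by
              exact pow_le_pow_left₀ (by positivity) h2 m
          _ = Real.exp ((1 / m) * m) := by rw [← Real.exp_nat_mul]; ring_nf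
          _ = Real.exp 1 := by rw [one_div, inv_mul_cancel₀ (ne_of_gt hmpos)]
    calc ((m + 1 : ℕ) : ℝ) ^ (m + 1) = ((m + 1 : ℕ) : ℝ) ^ m * ((m+1 : ℕ) : ℝ) := pow_succ _ _
      _ ≤ ((m : ℝ) ^ m * Real.exp 1) * ((m+1 : ℕ) : ℝ) := by
          refine mul_le_mul_of_nonneg_right hstep (by positivity)
      _ ≤ ((Real.exp 1 ^ m * m.factorial) * Real.exp 1) * ((m+1 : ℕ) : ℝ) := by
          refine mul_le_mul_of_nonneg_right (mul_le_mul_of_nonneg_right ih (by positivity))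
            (by positivity)
      _ = Real.exp 1 ^ (m+1) * (((m+1:ℕ)) * m.factorial : ℕ) := by
          push_cast; ring
      _ = Real.exp 1 ^ (m+1) * (m+1).factorial := by
          rw [Nat.factorial_succ]

instance inst_s3 : IsProbabilityMeasure ((volume : Measure ℝ).restrict (Set.Icc 0 1)) := by
  constructor
  rw [Measure.restrict_apply_univ, Real.volume_Icc]
  norm_num

lemma theta_le_sum (k n h : ℕ) :
    theta k n h ≤ (n : ℝ) ^ h *
      ∑ t ∈ Finset.range (h + 1), ((validFinset k h t).card : ℝ) / (t + 1).factorial := by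
  classical
  set μ := treeLabelMeasure n h with hμ
  set A : (Fin h → Fin n) → (t : Fin (h+1)) → (Fin (t.val + 1) → Fin (h + 1)) →
      Set (TreeVertex n h → ℝ) := fun leaf t r =>
    {ω | ValidSeq k h t.val r ∧ StrictMono fun i => ω (pathVertex leaf (r i))} with hA
  have hsub : kAccessibleEvent k n h ⊆
      ⋃ (leaf : Fin h → Fin n), ⋃ (t : Fin (h+1)), ⋃ (r : Fin (t.val+1) → Fin (h+1)),
        A leaf t r := by
    rintro ω ⟨leaf, t, r, h1, h2, h3, h4, h5⟩
    have ht : t ≤ h := by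
      have := Fintype.card_le_of_injective r h1.injective
      simpa using this
    exact Set.mem_iUnion.mpr ⟨leaf, Set.mem_iUnion.mpr ⟨⟨t, by omega⟩,
      Set.mem_iUnion.mpr ⟨r, ⟨⟨h1, h2, h3, h4⟩, h5⟩⟩⟩⟩
  have hbound : ∀ (leaf : Fin h → Fin n) (t : Fin (h+1)) (r : Fin (t.val+1) → Fin (h+1)),
      μ (A leaf t r) ≤ if ValidSeq k h t.val r then ((t.val+1).factorial : ℝ≥0∞)⁻¹ else 0 := by
    intro leaf t r
    by_cases hv : ValidSeq k h t.val r
    · rw [if_pos hv]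
      have hginj : Function.Injective (fun i : Fin (t.val+1) => pathVertex leaf (r i)) := by
        intro a b hab
        have h0 : r a = r b := congrArg Sigma.fst hab
        exact hv.1.injective h0
      calc μ (A leaf t r) ≤ μ {ω | StrictMono fun i => ω (pathVertex leaf (r i))} :=
            measure_mono fun ω hω => hω.2
        _ ≤ ((t.val+1).factorial : ℝ≥0∞)⁻¹ := measure_pi_strictMono_le hginj
    · rw [if_neg hv]
      have hempty : A leaf t r = ∅ := by
        ext ω; simp [hA, hv]
      simp [hempty]
  set Q : ℝ≥0∞ := (n : ℝ≥0∞) ^ h * ∑ t ∈ Finset.range (h + 1),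
    ((validFinset k h t).card : ℝ≥0∞) * (((t+1).factorial : ℝ≥0∞))⁻¹ with hQ
  have hsumr : ∀ (t : Fin (h+1)),
      (∑ r : Fin (t.val+1) → Fin (h+1),
        if ValidSeq k h t.val r then ((t.val+1).factorial : ℝ≥0∞)⁻¹ else 0)
      = ((validFinset k h t.val).card : ℝ≥0∞) * (((t.val+1).factorial : ℝ≥0∞))⁻¹ := by
    intro t
    rw [← Finset.sum_filter]
    have hfe : Finset.filter (fun r => ValidSeq k h t.val r) Finset.univ
        = validFinset k h t.val := by
      unfold validFinset
      convert rfl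
    rw [hfe, Finset.sum_const, nsmul_eq_mul]
  have hmain : μ (kAccessibleEvent k n h) ≤ Q := by
    calc μ (kAccessibleEvent k n h)
        ≤ μ (⋃ (leaf : Fin h → Fin n), ⋃ (t : Fin (h+1)), ⋃ (r : Fin (t.val+1) → Fin (h+1)),
            A leaf t r) := measure_mono hsub
      _ ≤ ∑ leaf : Fin h → Fin n, μ (⋃ (t : Fin (h+1)), ⋃ (r : Fin (t.val+1) → Fin (h+1)),
            A leaf t r) := measure_iUnion_fintype_le μ _
      _ ≤ ∑ leaf : Fin h → Fin n, ∑ t : Fin (h+1), μ (⋃ (r : Fin (t.val+1) → Fin (h+1)),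
            A leaf t r) := Finset.sum_le_sum fun leaf _ => measure_iUnion_fintype_le μ _
      _ ≤ ∑ leaf : Fin h → Fin n, ∑ t : Fin (h+1), ∑ r : Fin (t.val+1) → Fin (h+1),
            μ (A leaf t r) :=
          Finset.sum_le_sum fun leaf _ => Finset.sum_le_sum fun t _ =>
            measure_iUnion_fintype_le μ _
      _ ≤ ∑ leaf : Fin h → Fin n, ∑ t : Fin (h+1),
            ((validFinset k h t.val).card : ℝ≥0∞) * (((t.val+1).factorial : ℝ≥0∞))⁻¹ := by
          refine Finset.sum_le_sum fun leaf _ => Finset.sum_le_sum fun t _ => ?_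
          rw [← hsumr t]
          exact Finset.sum_le_sum fun r _ => hbound leaf t r
      _ = Q := by
          rw [Finset.sum_const, nsmul_eq_mul, hQ]
          congr 1
          · simp [Finset.card_univ]
          · exact Fin.sum_univ_eq_sum_range (fun t =>
              ((validFinset k h t).card : ℝ≥0∞) * (((t+1).factorial : ℝ≥0∞))⁻¹) (h+1)
  have hterm_ne : ∀ t : ℕ, ((validFinset k h t).card : ℝ≥0∞) * (((t+1).factorial : ℝ≥0∞))⁻¹ ≠ ⊤ :=
    fun t => ENNReal.mul_ne_top (ENNReal.natCast_ne_top _)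
      (ENNReal.inv_ne_top.mpr (Nat.cast_ne_zero.mpr (Nat.factorial_ne_zero _)))
  have hQne : Q ≠ ⊤ := by
    rw [hQ]
    exact ENNReal.mul_ne_top (by simp) (ENNReal.sum_lt_top.mpr fun t _ =>
      lt_top_iff_ne_top.mpr (hterm_ne t)).ne
  have htheta : theta k n h ≤ Q.toReal := by
    rw [theta]
    exact ENNReal.toReal_mono hQne hmain
  refine htheta.trans (le_of_eq ?_)
  rw [hQ, ENNReal.toReal_mul, ENNReal.toReal_sum (fun t _ => hterm_ne t)]
  have h1 : ((n : ℝ≥0∞) ^ h).toReal = (n:ℝ)^h := by simp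
  rw [h1]
  congr 1
  refine Finset.sum_congr rfl fun t _ => ?_
  rw [ENNReal.toReal_mul, ENNReal.toReal_inv, div_eq_mul_inv]
  simp

lemma theta_zero (k h : ℕ) (hh : 1 ≤ h) : theta k 0 h = 0 := by
  have hempty : kAccessibleEvent k 0 h = ∅ := by
    ext ω
    simp only [kAccessibleEvent, Set.mem_setOf_eq, Set.mem_empty_iff_false, iff_false]
    rintro ⟨leaf, -⟩
    exact (leaf ⟨0, hh⟩).elim0
  rw [theta, hempty]
  simp

set_option maxHeartbeats 1000000 in
theorem theta_tendsto_zero_of_const_mul_kth_root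
    (k : ℕ) (hk : 0 < k) (c : ℝ) (hc0 : 0 < c) (hc1 : c < 1) (f : ℕ → ℕ)
    (hf : ∀ᶠ h : ℕ in atTop,
      (f h : ℝ) ≤ c * ((h : ℝ) / (Real.exp 1 * k)) ^ ((1 : ℝ) / k)) :
    Tendsto (fun h : ℕ => theta k (f h) h) atTop (nhds 0) := by
  -- basic constants
  set ε : ℝ := min (Real.log c⁻¹ / 2) 1 with hε
  have hlogpos : 0 < Real.log c⁻¹ := Real.log_pos (by rw [one_lt_inv_iff₀]; exact ⟨hc0, hc1⟩)
  have hε0 : 0 < ε := lt_min (by linarith) one_pos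
  have hε1 : ε ≤ 1 := min_le_right _ _
  set r : ℝ := c * Real.exp ε with hrdef
  have hr0 : 0 < r := mul_pos hc0 (Real.exp_pos _)
  have hr1 : r < 1 := by
    rcases le_total (Real.log c⁻¹ / 2) 1 with hcase | hcase
    · have hεeq : ε = Real.log c⁻¹ / 2 := min_eq_left hcase
      have h2 : Real.exp ε < Real.exp (Real.log c⁻¹) := by
        apply Real.exp_lt_exp.mpr
        rw [hεeq]; linarith
      rw [Real.exp_log (by positivity)] at h2
      calc r < c * c⁻¹ := by
            exact mul_lt_mul_of_pos_left h2 hc0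
        _ = 1 := mul_inv_cancel₀ (ne_of_gt hc0)
    · have hεeq : ε = 1 := min_eq_right hcase
      have hcle : c ≤ Real.exp (-2) := by
        have : 2 ≤ Real.log c⁻¹ := by linarith
        have h3 : Real.exp 2 ≤ c⁻¹ := by
          calc Real.exp 2 ≤ Real.exp (Real.log c⁻¹) := Real.exp_le_exp.mpr this
            _ = c⁻¹ := Real.exp_log (by positivity)
        rw [Real.exp_neg]
        exact (le_inv_comm₀ (Real.exp_pos _) hc0).mp h3
      calc r ≤ Real.exp (-2) * Real.exp ε :=
            mul_le_mul_of_nonneg_right hcle (Real.exp_pos _).le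
        _ = Real.exp (-2 + ε) := (Real.exp_add _ _).symm
        _ < 1 := by
            rw [← Real.exp_zero]
            apply Real.exp_lt_exp.mpr
            rw [hεeq]; norm_num
  set x : ℝ := ε / k with hxdef
  have hk1 : (1 : ℝ) ≤ k := by exact_mod_cast hk
  have hx0 : 0 < x := div_pos hε0 (by linarith)
  have hx1 : x ≤ 1 := by
    rw [div_le_one (by linarith)]; linarith
  set K : ℝ := (1 / x) ^ k with hKdef
  have hK1 : (1 : ℝ) ≤ K := one_le_pow₀ (by rw [le_div_iff₀ hx0]; linarith)
  have hxK : x ^ k * K = 1 := by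
    rw [hKdef]
    field_simp
    rw [← mul_pow, mul_one_div_cancel hx0.ne', one_pow]
  have hKx : ∀ j : ℕ, j ≤ k → (1/x) ^ j ≤ K := by
    intro j hj
    exact pow_le_pow_right₀ (by rw [le_div_iff₀ hx0]; linarith) hj
  -- the geometric-series tail bound
  set C : ℕ := k * (Nat.ceil (4 * K) + 1) with hC
  have hmain : ∀ᶠ h : ℕ in atTop, theta k (f h) h ≤ 2 * K * r ^ h := by
    filter_upwards [hf, eventually_ge_atTop (max C 1)] with h hfh hhge
    have hh1 : 1 ≤ h := le_trans (le_max_right _ _) hhge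
    set d : ℕ := (h - 1) / k with hd
    set m : ℕ := d + 1 with hm
    have hdm := Nat.div_add_mod (h - 1) k
    have hmod := Nat.mod_lt (h - 1) hk
    have hkm : h ≤ k * m := by
      rw [hm, Nat.mul_add, Nat.mul_one, hd]
      omega
    have hkm' : k * m ≤ h - 1 + k := by
      rw [hm, Nat.mul_add, Nat.mul_one, hd]
      omega
    have hmh : m ≤ h := by
      have := Nat.div_le_self (h - 1) k
      omega
    have hmC : 4 * K ≤ (m : ℝ) := by
      have h1 : C ≤ h := le_trans (le_max_left _ _) hhge
      have h2 : k * (Nat.ceil (4 * K) + 1) ≤ k * m := le_trans h1 hkm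
      have h3 : Nat.ceil (4 * K) + 1 ≤ m := Nat.le_of_mul_le_mul_left h2 hk
      calc (4 * K : ℝ) ≤ Nat.ceil (4 * K) := Nat.le_ceil _
        _ ≤ (m : ℝ) := by exact_mod_cast le_trans (Nat.le_succ _) h3
    have hm1 : 1 ≤ m := by rw [hm]; exact Nat.succ_le_succ (Nat.zero_le d)
    have hmpos : (0:ℝ) < m := by exact_mod_cast hm1
    rcases Nat.eq_zero_or_pos (f h) with hn0 | hn1
    · rw [hn0, theta_zero k h hh1]
      positivity
    -- main case
    have hn1' : (1:ℝ) ≤ (f h : ℝ) := by exact_mod_cast hn1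
    set n := f h with hn
    set q : ℝ := ∑ j ∈ Finset.range k, x ^ j with hq
    have hq0 : 0 ≤ q := Finset.sum_nonneg fun j _ => by positivity
    have hkx : (k:ℝ) * x = ε := by
      rw [hxdef, mul_div_cancel₀ _ (by linarith : (k:ℝ) ≠ 0)]
    have hqle : q ≤ 1 + ε := by
      have hsplit : q = (∑ i ∈ Finset.range (k-1), x ^ (i+1)) + x ^ 0 := by
        rw [hq]
        have : k = (k - 1) + 1 := by omega
        rw [this, Finset.sum_range_succ']
        simp
      have hbd : ∀ i ∈ Finset.range (k-1), x ^ (i+1) ≤ x := by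
        intro i _
        calc x ^ (i+1) = x ^ i * x := pow_succ _ _
          _ ≤ 1 * x := by
              refine mul_le_mul_of_nonneg_right ?_ hx0.le
              exact pow_le_one₀ hx0.le hx1
          _ = x := one_mul _
      calc q ≤ (∑ _i ∈ Finset.range (k-1), x) + 1 := by
            rw [hsplit, pow_zero]
            exact add_le_add_left (Finset.sum_le_sum hbd) 1
        _ = (k - 1 : ℕ) * x + 1 := by rw [Finset.sum_const, Finset.card_range, nsmul_eq_mul]
        _ ≤ (k:ℝ) * x + 1 := by
            refine add_le_add_left (mul_le_mul_of_nonneg_right ?_ hx0.le) 1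
            exact_mod_cast Nat.sub_le k 1
        _ = 1 + ε := by rw [hkx]; ring
    have hq2 : q ≤ 2 := by linarith
    have hqexp : q ≤ Real.exp ε := by
      have := Real.add_one_le_exp ε
      linarith
    set ρ : ℝ := q / (x ^ k * m) with hρ
    have hρ0 : 0 ≤ ρ := by positivity
    have hρhalf : ρ ≤ 1 / 2 := by
      have hden : (4:ℝ) ≤ x ^ k * m := by
        calc (4:ℝ) = 4 * (x ^ k * K) := by rw [hxK]; ring
          _ = x ^ k * (4 * K) := by ring
          _ ≤ x ^ k * m := mul_le_mul_of_nonneg_left hmC (by positivity)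
      rw [hρ, div_le_iff₀ (by linarith)]
      linarith
    -- the series bound
    have hcardle : ∀ t : ℕ, ((validFinset k h t).card : ℝ) ≤ x ^ h * q ^ t / x ^ (k * t) := by
      intro t
      rw [le_div_iff₀ (by positivity)]
      exact card_validFinset_mul_le hx0 hx1
    have hxhle : x ^ h / x ^ (k * m) ≤ K := by
      have hsp : x ^ (k * m) = x ^ h * x ^ (k * m - h) := by
        rw [← pow_add]
        congr 1
        omega
      rw [hsp, div_mul_eq_div_div, div_self (by positivity : (x:ℝ) ^ h ≠ 0), ← one_div_pow]
      exact hKx _ (by omega)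
    -- sum splitting
    set S : ℝ := ∑ t ∈ Finset.range (h+1), ((validFinset k h t).card : ℝ) / (t+1).factorial
      with hS
    have hθ := theta_le_sum k n h
    have hzero : ∀ t ∈ Finset.range m, ((validFinset k h t).card : ℝ) / (t+1).factorial = 0 := by
      intro t ht
      have htm : t < m := Finset.mem_range.mp ht
      have hlt : k * t < h := by
        have h1 : t ≤ d := by omega
        have h4 : d * k ≤ h - 1 := by rw [hd]; exact Nat.div_mul_le_self _ _
        calc k * t ≤ k * d := Nat.mul_le_mul_left k h1
          _ = d * k := Nat.mul_comm _ _
          _ ≤ h - 1 := h4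
          _ < h := by omega
      rw [validFinset_eq_empty hlt]
      simp
    have hterm : ∀ t ∈ Finset.Ico m (h+1),
        ((validFinset k h t).card : ℝ) / (t+1).factorial
          ≤ (K * q ^ m / m.factorial) * ρ ^ (t - m) := by
      intro t ht
      obtain ⟨htm, hth⟩ := Finset.mem_Ico.mp ht
      set s := t - m with hs
      have hts : t = m + s := by omega
      have hfac : (m.factorial : ℝ) * (m:ℝ) ^ s ≤ ((t+1).factorial : ℝ) := by
        have h1 : m.factorial * (m+1) ^ s ≤ (m + s).factorial := Nat.factorial_mul_pow_le_factorial
        have h2 : (m+s).factorial ≤ (t+1).factorial := Nat.factorial_le (by omega)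
        have h3 : m ^ s ≤ (m+1) ^ s := Nat.pow_le_pow_left (by omega) s
        calc (m.factorial : ℝ) * (m:ℝ)^s = ((m.factorial * m ^ s : ℕ) : ℝ) := by push_cast; ring
          _ ≤ ((t+1).factorial : ℝ) := by
              exact_mod_cast le_trans (Nat.mul_le_mul_left _ h3) (le_trans h1 h2)
      calc ((validFinset k h t).card : ℝ) / (t+1).factorial
          ≤ (x ^ h * q ^ t / x ^ (k*t)) / ((m.factorial : ℝ) * (m:ℝ) ^ s) :=
            div_le_div₀ (div_nonneg (mul_nonneg (pow_nonneg hx0.le _) (pow_nonneg hq0 _)) (pow_nonneg hx0.le _))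
              (hcardle t) (mul_pos (Nat.cast_pos.mpr (Nat.factorial_pos _)) (pow_pos hmpos _)) hfac
        _ = (x ^ h / x ^ (k*m)) * (q ^ m / m.factorial) * (q / (x^k * m)) ^ s := by
            rw [hts]
            have aux : ∀ (x q : ℝ) (k m s h : ℕ), 0 < x → (0:ℝ) < m → (0:ℝ) < m.factorial →
                (x ^ h * q ^ (m+s) / x ^ (k*(m+s))) / ((m.factorial : ℝ) * (m:ℝ) ^ s)
                  = (x ^ h / x ^ (k*m)) * (q ^ m / m.factorial) * (q / (x^k * m)) ^ s := by
              intro x q k m s h hx hm hf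
              rw [pow_add, mul_add, pow_add, div_pow, mul_pow, pow_mul]
              field_simp
              ring
            exact aux x q k m s h hx0 hmpos (Nat.cast_pos.mpr (Nat.factorial_pos _))
        _ ≤ K * (q ^ m / m.factorial) * ρ ^ s := by
            rw [← hρ]
            refine mul_le_mul_of_nonneg_right ?_ (pow_nonneg hρ0 _)
            exact mul_le_mul_of_nonneg_right hxhle (div_nonneg (pow_nonneg hq0 _) (Nat.cast_nonneg _))
        _ = (K * q ^ m / m.factorial) * ρ ^ s := by ring
    have hSle : S ≤ 2 * (K * q ^ m / m.factorial) := by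
      rw [hS, Finset.range_eq_Ico, ← Finset.sum_Ico_consecutive _ (Nat.zero_le m)
        (show m ≤ h + 1 by omega)]
      have hz : ∑ t ∈ Finset.Ico 0 m, ((validFinset k h t).card : ℝ) / (t+1).factorial = 0 := by
        refine Finset.sum_eq_zero fun t ht => ?_
        exact hzero t (by rwa [Finset.range_eq_Ico])
      rw [hz, zero_add]
      calc ∑ t ∈ Finset.Ico m (h+1), ((validFinset k h t).card : ℝ) / (t+1).factorial
          ≤ ∑ t ∈ Finset.Ico m (h+1), (K * q ^ m / m.factorial) * ρ ^ (t - m) :=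
            Finset.sum_le_sum hterm
        _ = (K * q ^ m / m.factorial) * ∑ t ∈ Finset.Ico m (h+1), ρ ^ (t - m) := by
            rw [Finset.mul_sum]
        _ ≤ (K * q ^ m / m.factorial) * 2 := by
            refine mul_le_mul_of_nonneg_left ?_ (by positivity)
            rw [Finset.sum_Ico_eq_sum_range]
            calc ∑ i ∈ Finset.range (h + 1 - m), ρ ^ (m + i - m)
                = ∑ i ∈ Finset.range (h + 1 - m), ρ ^ i := by
                  refine Finset.sum_congr rfl fun i _ => ?_
                  congr 1
                  omega
              _ ≤ ∑ i ∈ Finset.range (h + 1 - m), (1/(2:ℝ)) ^ i :=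
                  Finset.sum_le_sum fun i _ => pow_le_pow_left₀ hρ0 hρhalf i
              _ ≤ 2 := sum_geometric_two_le _
        _ = 2 * (K * q ^ m / m.factorial) := by ring
    -- final chain
    have hnk : (n:ℝ)^k ≤ c^k * ((h:ℝ)/(Real.exp 1 * k)) := by
      have hBnn : (0:ℝ) ≤ (h:ℝ)/(Real.exp 1 * k) := by positivity
      calc (n:ℝ)^k ≤ (c * ((h:ℝ)/(Real.exp 1*k)) ^ ((1:ℝ)/k))^k :=
            pow_le_pow_left₀ (by positivity) hfh k
        _ = c^k * (((h:ℝ)/(Real.exp 1*k)) ^ ((1:ℝ)/k))^k := mul_pow _ _ _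
        _ = c^k * ((h:ℝ)/(Real.exp 1*k)) := by
            congr 1
            rw [one_div]
            exact Real.rpow_inv_natCast_pow hBnn (by omega)
    have hnh : (n:ℝ)^h ≤ (c^k * ((h:ℝ)/(Real.exp 1*k)))^m := by
      calc (n:ℝ)^h ≤ (n:ℝ)^(k*m) := pow_le_pow_right₀ hn1' hkm
        _ = ((n:ℝ)^k)^m := by rw [pow_mul]
        _ ≤ (c^k * ((h:ℝ)/(Real.exp 1*k)))^m := pow_le_pow_left₀ (by positivity) hnk m
    have hfactle : (1:ℝ)/m.factorial ≤ Real.exp 1 ^ m / (m:ℝ)^m := by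
      rw [div_le_div_iff₀ (by positivity) (by positivity)]
      have := pow_self_le_exp_mul_factorial m
      linarith
    have hkey : (n:ℝ)^h / m.factorial ≤ c ^ h := by
      have hbase : (c^k * ((h:ℝ)/(Real.exp 1*k))) * (Real.exp 1/(m:ℝ))
          = c^k * ((h:ℝ)/((k:ℝ)*m)) := by
        have he0 : Real.exp 1 ≠ 0 := (Real.exp_pos 1).ne'
        field_simp
      calc (n:ℝ)^h / m.factorial = (n:ℝ)^h * ((1:ℝ)/m.factorial) := by ring
        _ ≤ (c^k * ((h:ℝ)/(Real.exp 1*k)))^m * (Real.exp 1 ^ m / (m:ℝ)^m) :=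
            mul_le_mul hnh hfactle (by positivity) (by positivity)
        _ = ((c^k * ((h:ℝ)/(Real.exp 1*k))) * (Real.exp 1/(m:ℝ)))^m := by
            ring
        _ = (c^k * ((h:ℝ)/((k:ℝ)*m)))^m := by rw [hbase]
        _ ≤ (c^k * 1)^m := by
            refine pow_le_pow_left₀ (by positivity) ?_ m
            refine mul_le_mul_of_nonneg_left ?_ (by positivity)
            rw [div_le_one (by positivity)]
            exact_mod_cast hkm
        _ = c^(k*m) := by rw [mul_one, ← pow_mul]
        _ ≤ c^h := pow_le_pow_of_le_one hc0.le hc1.le hkm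
    have hqm : q^m ≤ Real.exp ε ^ h := by
      calc q^m ≤ Real.exp ε ^ m := pow_le_pow_left₀ hq0 hqexp m
        _ ≤ Real.exp ε ^ h := pow_le_pow_right₀ (Real.one_le_exp hε0.le) hmh
    calc theta k n h ≤ (n:ℝ)^h * S := hθ
      _ ≤ (n:ℝ)^h * (2*(K*q^m/m.factorial)) := by
          refine mul_le_mul_of_nonneg_left hSle (by positivity)
      _ = 2*K*((n:ℝ)^h/m.factorial * q^m) := by ring
      _ ≤ 2*K*(c^h * Real.exp ε ^ h) := by
          refine mul_le_mul_of_nonneg_left ?_ (by positivity)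
          exact mul_le_mul hkey hqm (by positivity) (by positivity)
      _ = 2*K*r^h := by rw [hrdef, mul_pow]
  have hg : Tendsto (fun h : ℕ => 2*K*r^h) atTop (nhds 0) := by
    have h1 := (tendsto_pow_atTop_nhds_zero_of_lt_one hr0.le hr1).const_mul (2*K)
    simpa using h1
  exact squeeze_zero' (Eventually.of_forall fun h => ENNReal.toReal_nonneg) hmain hg
end

section
/- Let f : ℕ → ℕ give the branching of a sequence of complete f(h)-ary trees of height h. If h/e + log(h)/(2e) − f(h) → ∞ as h → ∞, then θ_1(f(h), h) → 0 as h → ∞. -/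
open MeasureTheory Filter

open scoped ENNReal

namespace ThetaAux

instance unifProb : IsProbabilityMeasure ((volume : Measure ℝ).restrict (Set.Icc 0 1)) := by
  constructor
  rw [Measure.restrict_apply_univ, Real.volume_Icc]
  norm_num

instance treeProb (n h : ℕ) : IsProbabilityMeasure (treeLabelMeasure n h) :=
  MeasureTheory.Measure.pi.instIsProbabilityMeasure _

variable {n h : ℕ}

lemma pathVertex_injective (leaf : Fin h → Fin n) :
    Function.Injective (pathVertex leaf) := by
  intro i j hij
  exact congrArg Sigma.fst hij

/-- The event that the labels along the path to `leaf`, reordered by `σ`, are increasing. -/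
def pathEvent (leaf : Fin h → Fin n) (σ : Equiv.Perm (Fin (h + 1))) :
    Set (TreeVertex n h → ℝ) :=
  {ω | StrictMono fun i => ω (pathVertex leaf (σ i))}

lemma measurable_pathEvent (leaf : Fin h → Fin n) (σ : Equiv.Perm (Fin (h + 1))) :
    MeasurableSet (pathEvent leaf σ : Set (TreeVertex n h → ℝ)) := by
  have : pathEvent (n := n) leaf σ =
      ⋂ (i : Fin (h + 1)) (j : Fin (h + 1)) (_ : i < j),
        {ω : TreeVertex n h → ℝ | ω (pathVertex leaf (σ i)) < ω (pathVertex leaf (σ j))} := by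
    ext ω
    simp only [pathEvent, Set.mem_setOf_eq, Set.mem_iInter]
    exact ⟨fun hsm i j hij => hsm hij, fun H a b hab => H a b hab⟩
  rw [this]
  refine MeasurableSet.iInter fun i => MeasurableSet.iInter fun j => MeasurableSet.iInter fun _ => ?_
  exact measurableSet_lt (measurable_pi_apply _) (measurable_pi_apply _)

lemma measure_pathEvent_eq (leaf : Fin h → Fin n) (σ : Equiv.Perm (Fin (h + 1))) :
    treeLabelMeasure n h (pathEvent leaf σ) = treeLabelMeasure n h (pathEvent leaf 1) := by
  classical
  set p : Fin (h + 1) ↪ TreeVertex n h := ⟨pathVertex leaf, pathVertex_injective leaf⟩ with hp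
  set e : Equiv.Perm (TreeVertex n h) := σ.viaEmbedding p
  have hMP : MeasurePreserving (MeasurableEquiv.piCongrLeft (fun _ : TreeVertex n h => ℝ) e)
      (treeLabelMeasure n h) (treeLabelMeasure n h) :=
    by unfold treeLabelMeasure
       exact measurePreserving_piCongrLeft
         (fun _ : TreeVertex n h => (volume : Measure ℝ).restrict (Set.Icc 0 1)) e
  have key : (MeasurableEquiv.piCongrLeft (fun _ : TreeVertex n h => ℝ) e) ⁻¹'
      (pathEvent leaf σ) = pathEvent leaf 1 := by
    ext ω
    simp only [Set.mem_preimage, pathEvent, Set.mem_setOf_eq]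
    have happ : ∀ i : Fin (h + 1),
        (MeasurableEquiv.piCongrLeft (fun _ : TreeVertex n h => ℝ) e) ω
          (pathVertex leaf (σ i)) = ω (pathVertex leaf i) := by
      intro i
      have h1 : pathVertex leaf (σ i) = e (pathVertex leaf i) := by
        simpa [p] using (σ.viaEmbedding_apply p i).symm
      rw [h1]
      exact MeasurableEquiv.piCongrLeft_apply_apply e (β := fun _ : TreeVertex n h => ℝ)
        ω (pathVertex leaf i)
    rw [funext happ]
    simp
  calc treeLabelMeasure n h (pathEvent leaf σ)
      = treeLabelMeasure n h ((MeasurableEquiv.piCongrLeft (fun _ : TreeVertex n h => ℝ) e) ⁻¹'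
          (pathEvent leaf σ)) := (hMP.measure_preimage (measurable_pathEvent leaf σ).nullMeasurableSet).symm
    _ = treeLabelMeasure n h (pathEvent leaf 1) := by rw [key]

lemma pathEvent_disjoint (leaf : Fin h → Fin n) :
    Pairwise (Function.onFun Disjoint fun σ : Equiv.Perm (Fin (h + 1)) => pathEvent (n := n) leaf σ) := by
  intro σ τ hστ
  rw [Function.onFun, Set.disjoint_left]
  intro ω hσ hτ
  set g : Fin (h + 1) → ℝ := fun i => ω (pathVertex leaf i) with hg
  have hσ' : StrictMono (g ∘ σ) := hσ
  have hτ' : StrictMono (g ∘ τ) := hτ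
  have hrange : Set.range (g ∘ σ) = Set.range (g ∘ τ) := by
    rw [Set.range_comp, Set.range_comp, σ.range_eq_univ, τ.range_eq_univ]
  have heq : (g ∘ σ : Fin (h + 1) → ℝ) = g ∘ τ :=
    (@StrictMono.range_inj (Fin (h + 1)) ℝ _ _ Finite.to_wellFoundedLT _ _ hσ' hτ').mp hrange
  have hginj : Function.Injective g := by
    intro a b hab
    have h2 : (g ∘ σ) (σ.symm a) = (g ∘ σ) (σ.symm b) := by
      simp [Function.comp, hab]
    have h3 := hσ'.injective h2
    have := congrArg σ h3
    simpa using this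
  apply hστ
  ext i
  exact congrArg Fin.val (hginj (congrFun heq i))

lemma measure_pathEvent_le (leaf : Fin h → Fin n) :
    treeLabelMeasure n h (pathEvent leaf 1) ≤ (((h + 1).factorial : ℝ≥0∞))⁻¹ := by
  classical
  have hsum : ∑ σ : Equiv.Perm (Fin (h + 1)), treeLabelMeasure n h (pathEvent leaf σ) ≤ 1 := by
    have := MeasureTheory.sum_measure_le_measure_univ
      (μ := treeLabelMeasure n h) (s := Finset.univ)
      (t := fun σ : Equiv.Perm (Fin (h + 1)) => pathEvent leaf σ)
      (fun σ _ => (measurable_pathEvent leaf σ).nullMeasurableSet)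
      (fun σ _ τ _ hστ => (pathEvent_disjoint leaf hστ).aedisjoint)
    simpa using this
  have hconst : ∀ σ : Equiv.Perm (Fin (h + 1)),
      treeLabelMeasure n h (pathEvent leaf σ) = treeLabelMeasure n h (pathEvent leaf 1) :=
    fun σ => measure_pathEvent_eq leaf σ
  rw [Finset.sum_congr rfl fun σ _ => hconst σ, Finset.sum_const, Finset.card_univ,
    Fintype.card_perm, Fintype.card_fin] at hsum
  have hfac : ((h + 1).factorial : ℝ≥0∞) ≠ 0 := by
    exact_mod_cast Nat.cast_ne_zero.mpr (h + 1).factorial_ne_zero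
  rw [ENNReal.le_inv_iff_mul_le, mul_comm]
  simpa [nsmul_eq_mul] using hsum

lemma event_subset :
    kAccessibleEvent 1 n h ⊆ ⋃ leaf : Fin h → Fin n, pathEvent leaf 1 := by
  rintro ω ⟨leaf, t, r, hr, h0, hlast, hgap, hsm⟩
  refine Set.mem_iUnion.mpr ⟨leaf, ?_⟩
  have key : ∀ j : ℕ, ∀ hj : j < t + 1, (r ⟨j, hj⟩).val = j := by
    intro j
    induction j with
    | zero =>
      intro hj
      have : (⟨0, hj⟩ : Fin (t + 1)) = 0 := rfl
      rw [this, h0]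
      rfl
    | succ j ih =>
      intro hj
      have hjt : j < t := by omega
      set i : Fin t := ⟨j, hjt⟩ with hi
      have hcs : i.castSucc = ⟨j, by omega⟩ := rfl
      have hsc : i.succ = ⟨j + 1, hj⟩ := rfl
      have hlt : (r i.castSucc).val < (r i.succ).val := hr (Fin.castSucc_lt_succ : i.castSucc < i.succ)
      have hle := hgap i
      have hih : (r i.castSucc).val = j := by rw [hcs]; exact ih _
      rw [← hsc]
      omega
  have ht : t = h := by
    have h1 : (r (Fin.last t)).val = t := key t t.lt_succ_self
    rw [hlast] at h1
    simpa using h1.symm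
  subst ht
  have req : ∀ i : Fin (t + 1), r i = i := fun i => Fin.ext (key i.val i.isLt)
  have hfun : (fun i => ω (pathVertex leaf (r i))) = fun i => ω (pathVertex leaf i) :=
    funext fun i => by rw [req i]
  show StrictMono fun i => ω (pathVertex leaf ((1 : Equiv.Perm (Fin (t + 1))) i))
  simpa [hfun] using hsm

lemma measure_event_le :
    treeLabelMeasure n h (kAccessibleEvent 1 n h) ≤
      (n : ℝ≥0∞) ^ h * (((h + 1).factorial : ℝ≥0∞))⁻¹ := by
  calc treeLabelMeasure n h (kAccessibleEvent 1 n h)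
      ≤ treeLabelMeasure n h (⋃ leaf : Fin h → Fin n, pathEvent leaf 1) :=
        measure_mono event_subset
    _ ≤ ∑' leaf : Fin h → Fin n, treeLabelMeasure n h (pathEvent leaf 1) := measure_iUnion_le _
    _ ≤ ∑' _ : Fin h → Fin n, (((h + 1).factorial : ℝ≥0∞))⁻¹ :=
        ENNReal.tsum_le_tsum fun leaf => measure_pathEvent_le leaf
    _ = (Fintype.card (Fin h → Fin n)) * (((h + 1).factorial : ℝ≥0∞))⁻¹ := by
        rw [tsum_fintype]
        simp [Finset.sum_const, nsmul_eq_mul]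
    _ = (n : ℝ≥0∞) ^ h * (((h + 1).factorial : ℝ≥0∞))⁻¹ := by
        rw [Fintype.card_fun]
        simp

lemma theta_le (n h : ℕ) :
    theta 1 n h ≤ (n : ℝ) ^ h / (h + 1).factorial := by
  have hb := measure_event_le (n := n) (h := h)
  have hRHS : (n : ℝ≥0∞) ^ h * (((h + 1).factorial : ℝ≥0∞))⁻¹ ≠ ⊤ := by
    apply ENNReal.mul_ne_top
    · exact ENNReal.pow_ne_top (ENNReal.natCast_ne_top n)
    · exact ENNReal.inv_ne_top.mpr (by exact_mod_cast (h + 1).factorial_ne_zero)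
  have := ENNReal.toReal_mono hRHS hb
  refine le_trans this (le_of_eq ?_)
  rw [ENNReal.toReal_mul, ENNReal.toReal_pow, ENNReal.toReal_inv]
  simp [div_eq_mul_inv]

lemma pow_le_factorial_mul_exp (m : ℕ) :
    (m : ℝ) ^ m ≤ m.factorial * Real.exp 1 ^ m := by
  induction m with
  | zero => simp
  | succ m ih =>
    have e1 : (1 : ℝ) ≤ Real.exp 1 := Real.one_le_exp (by norm_num)
    have h1 : ((m : ℝ) + 1) ^ m ≤ (m : ℝ) ^ m * Real.exp 1 := by
      rcases Nat.eq_zero_or_pos m with rfl | hm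
      · simpa using e1
      · have hm0 : (0 : ℝ) < m := by exact_mod_cast hm
        have heq : ((m : ℝ) + 1) = m * (1 + 1 / m) := by field_simp
        rw [heq, mul_pow]
        have h2 : (1 + 1 / (m : ℝ)) ^ m ≤ Real.exp 1 := by
          have h3 : (1 + 1 / (m : ℝ)) ≤ Real.exp (1 / m) := by
            have := Real.add_one_le_exp (1 / (m : ℝ)); linarith
          calc (1 + 1 / (m : ℝ)) ^ m ≤ Real.exp (1 / m) ^ m :=
                pow_le_pow_left₀ (by positivity) h3 m
            _ = Real.exp (m * (1 / m)) := by rw [← Real.exp_nat_mul]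
            _ = Real.exp 1 := by rw [mul_one_div, div_self (ne_of_gt hm0)]
        exact mul_le_mul_of_nonneg_left h2 (by positivity)
    have hcast : ((m + 1 : ℕ) : ℝ) = (m : ℝ) + 1 := by push_cast; ring
    calc ((m + 1 : ℕ) : ℝ) ^ (m + 1) = ((m : ℝ) + 1) * ((m : ℝ) + 1) ^ m := by
          rw [hcast, pow_succ]; ring
      _ ≤ ((m : ℝ) + 1) * ((m : ℝ) ^ m * Real.exp 1) := by
          apply mul_le_mul_of_nonneg_left h1 (by positivity)
      _ ≤ ((m : ℝ) + 1) * ((m.factorial * Real.exp 1 ^ m) * Real.exp 1) := by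
          apply mul_le_mul_of_nonneg_left _ (by positivity)
          apply mul_le_mul_of_nonneg_right ih (by positivity)
      _ = (m + 1).factorial * Real.exp 1 ^ (m + 1) := by
          rw [Nat.factorial_succ]; push_cast; ring

lemma div_exp_pow_le_factorial (m : ℕ) :
    ((m : ℝ) / Real.exp 1) ^ m ≤ m.factorial := by
  rw [div_pow, div_le_iff₀ (by positivity)]
  exact pow_le_factorial_mul_exp m

lemma sqrt_div_tendsto_zero :
    Tendsto (fun h : ℕ => Real.sqrt h / (h + 1)) atTop (nhds 0) := by
  apply squeeze_zero' (Filter.Eventually.of_forall fun h => by positivity)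
  · filter_upwards [eventually_ge_atTop 1] with h hh
    have hh1 : (1 : ℝ) ≤ (h : ℝ) := by exact_mod_cast hh
    have hs : Real.sqrt h * Real.sqrt h = (h : ℝ) :=
      Real.mul_self_sqrt (by linarith)
    have hspos : (0 : ℝ) < Real.sqrt h := Real.sqrt_pos.mpr (by linarith)
    show Real.sqrt h / ((h : ℝ) + 1) ≤ (Real.sqrt h)⁻¹
    rw [div_le_iff₀ (by positivity), inv_mul_eq_div, le_div_iff₀ hspos]
    nlinarith
  · have h1 : Tendsto (fun h : ℕ => Real.sqrt h) atTop atTop := by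
      have h2 := (tendsto_rpow_atTop (by norm_num : (0:ℝ) < 1/2)).comp
        (tendsto_natCast_atTop_atTop (R := ℝ))
      apply h2.congr
      intro x
      simp [Function.comp, Real.sqrt_eq_rpow]
    exact h1.inv_tendsto_atTop

lemma main_bound {n h : ℕ} (hh : 1 ≤ h)
    (hc0 : 0 ≤ (h : ℝ) / Real.exp 1 + Real.log h / (2 * Real.exp 1) - (n : ℝ)) :
    (n : ℝ) ^ h / (h + 1).factorial ≤
      Real.exp (Real.exp 1 + 2) * (Real.sqrt h / (h + 1)) := by
  set E := Real.exp 1 with hEdef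
  set H := (h : ℝ) with hHdef
  set N := (n : ℝ) with hNdef
  set L := Real.log H with hLdef
  set c : ℝ := H / E + L / (2 * E) - N with hcdef
  have hE : 0 < E := Real.exp_pos 1
  have hE2 : 2 ≤ E := by
    have := Real.add_one_le_exp 1; rw [hEdef]; linarith
  have hH : (1 : ℝ) ≤ H := by rw [hHdef]; exact_mod_cast hh
  have hL0 : 0 ≤ L := Real.log_nonneg hH
  rcases Nat.eq_zero_or_pos n with rfl | hn
  · have hz : N ^ h = 0 := by
      rw [hNdef, Nat.cast_zero, zero_pow (by omega : h ≠ 0)]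
    rw [hz, zero_div]
    positivity
  have hN1 : (1 : ℝ) ≤ N := by rw [hNdef]; exact_mod_cast hn
  have hfac : ((H + 1) / E) ^ (h + 1) ≤ ((h + 1).factorial : ℝ) := by
    have := div_exp_pow_le_factorial (h + 1)
    rw [hHdef]
    push_cast at this ⊢
    exact this
  have hdenpos : (0 : ℝ) < ((H + 1) / E) ^ (h + 1) := by positivity
  have step1 : N ^ h / ((h + 1).factorial : ℝ) ≤ N ^ h / (((H + 1) / E) ^ (h + 1)) :=
    div_le_div_of_nonneg_left (by positivity) hdenpos hfac
  set x : ℝ := N * E / (H + 1) with hxdef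
  have hx : 0 < x := by rw [hxdef]; positivity
  have step2 : N ^ h / (((H + 1) / E) ^ (h + 1)) = (E / (H + 1)) * x ^ h := by
    rw [hxdef, div_pow, div_pow, mul_pow, pow_succ, pow_succ]
    field_simp
  have hxh : x ^ h = Real.exp ((h : ℝ) * Real.log x) := by
    rw [Real.exp_nat_mul, Real.exp_log hx]
  have hlog : (h : ℝ) * Real.log x ≤ (h : ℝ) * (x - 1) :=
    mul_le_mul_of_nonneg_left (Real.log_le_sub_one_of_pos hx) (by positivity)
  have hNE : N * E = H + L / 2 - E * c := by
    rw [hcdef]; field_simp; ring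
  have hexp : (h : ℝ) * (x - 1) ≤ L / 2 + E := by
    have hx1 : (h : ℝ) * (x - 1) = H * (N * E - (H + 1)) / (H + 1) := by
      rw [hxdef, ← hHdef]; field_simp
    rw [hx1, hNE, div_le_iff₀ (by positivity : (0 : ℝ) < H + 1)]
    have hc0' : 0 ≤ c := hc0
    have hH' : (1:ℝ) ≤ H := hH
    have hL0' : (0:ℝ) ≤ L := hL0
    have hE' : (0:ℝ) < E := hE
    clear_value c x N L H E
    have k1 : 0 ≤ H * (E * c) := mul_nonneg (by linarith) (mul_nonneg hE.le hc0')
    have k2 : 0 ≤ L * H := mul_nonneg hL0 (by linarith)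
    have k3 : 0 ≤ E * H := mul_nonneg hE.le (by linarith)
    have hgoal : H * (H + L / 2 - E * c - (H + 1)) + (H * (E * c) + H) = H * (L/2) := by ring
    have k4 : H * (L/2) ≤ (L/2 + E) * (H + 1) := by nlinarith [k2, k3, hE, hL0]
    linarith [k1, k4]
  have hsq : Real.exp (L / 2) = Real.sqrt H := by
    rw [Real.sqrt_eq_rpow, Real.rpow_def_of_pos (by linarith : (0 : ℝ) < H), ← hLdef]
    congr 1
    ring
  have step3 : x ^ h ≤ Real.sqrt H * Real.exp E := by
    rw [hxh, ← hsq, ← Real.exp_add]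
    exact Real.exp_le_exp.mpr (le_trans hlog hexp)
  calc N ^ h / ((h + 1).factorial : ℝ)
      ≤ N ^ h / (((H + 1) / E) ^ (h + 1)) := step1
    _ = (E / (H + 1)) * x ^ h := step2
    _ ≤ (E / (H + 1)) * (Real.sqrt H * Real.exp E) :=
        mul_le_mul_of_nonneg_left step3 (by positivity)
    _ = (E * Real.exp E) * (Real.sqrt H / (H + 1)) := by ring
    _ ≤ Real.exp (E + 2) * (Real.sqrt H / (H + 1)) := by
        apply mul_le_mul_of_nonneg_right _ (by positivity)
        calc E * Real.exp E = Real.exp (1 + E) := by rw [Real.exp_add, hEdef]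
          _ ≤ Real.exp (E + 2) := Real.exp_le_exp.mpr (by linarith)

end ThetaAux
theorem theta_one_tendsto_zero_of_below_log_correction
    (f : ℕ → ℕ)
    (hf : Tendsto
      (fun h : ℕ => (h : ℝ) / Real.exp 1 + Real.log h / (2 * Real.exp 1) - (f h : ℝ))
      atTop atTop) :
    Tendsto (fun h : ℕ => theta 1 (f h) h) atTop (nhds 0) := by
  have hb : Tendsto (fun h : ℕ => Real.exp (Real.exp 1 + 2) * (Real.sqrt h / (h + 1)))
      atTop (nhds 0) := by
    have := ThetaAux.sqrt_div_tendsto_zero.const_mul (Real.exp (Real.exp 1 + 2))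
    simpa using this
  apply squeeze_zero' (Filter.Eventually.of_forall fun h => ENNReal.toReal_nonneg) _ hb
  filter_upwards [hf.eventually_ge_atTop 0, eventually_ge_atTop 1] with h hch hh1
  calc theta 1 (f h) h ≤ ((f h : ℝ)) ^ h / (h + 1).factorial := ThetaAux.theta_le _ _
    _ ≤ Real.exp (Real.exp 1 + 2) * (Real.sqrt h / (h + 1)) := ThetaAux.main_bound hh1 hch
end

section
/- Let α ≤ 1/e be a positive real constant and let f : ℕ → ℕ satisfy f(h) ≤ ⌊α·h⌋ for all sufficiently large h. Then θ_1(f(h), h) → 0 as h → ∞. -/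
open MeasureTheory Filter

instance instProbRestrictIcc01 :
    IsProbabilityMeasure ((volume : Measure ℝ).restrict (Set.Icc 0 1)) :=
  ⟨by rw [Measure.restrict_apply_univ, Real.volume_Icc]; norm_num⟩

/-- In a product of `[Fintype ι]` many copies of the uniform measure on `[0,1]`,
the probability that the coordinates along an injective `m`-tuple of indices are
strictly increasing is at most `1 / m!`. -/
lemma factorial_mul_measure_strictMono_le {ι : Type*} [Fintype ι] {m : ℕ}
    (v : Fin m → ι) (hv : Function.Injective v) :
    (m.factorial : ENNReal) *
      Measure.pi (fun _ : ι => (volume : Measure ℝ).restrict (Set.Icc 0 1))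
        {ω | StrictMono fun i => ω (v i)} ≤ 1 := by
  classical
  set μ0 := (volume : Measure ℝ).restrict (Set.Icc 0 1) with hμ0
  set μ := Measure.pi fun _ : ι => μ0 with hμ
  haveI : IsProbabilityMeasure μ := by rw [hμ]; infer_instance
  set S : Equiv.Perm (Fin m) → Set (ι → ℝ) :=
    fun τ => {ω | StrictMono fun i => ω (v (τ i))} with hSdef
  have hmeas : ∀ τ, MeasurableSet (S τ) := by
    intro τ
    have : S τ = ⋂ (i : Fin m) (j : Fin m) (_ : i < j),
        {ω : ι → ℝ | ω (v (τ i)) < ω (v (τ j))} := by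
      ext ω
      simp only [hSdef, Set.mem_setOf_eq, Set.mem_iInter, StrictMono]
    rw [this]
    exact .iInter fun i => .iInter fun j => .iInter fun _ =>
      measurableSet_lt (measurable_pi_apply _) (measurable_pi_apply _)
  have hdisj : Pairwise (Function.onFun Disjoint S) := by
    intro τ τ' hne
    rw [Function.onFun, Set.disjoint_left]
    intro ω h1 h2
    apply hne
    have h1' : StrictMono fun i => ω (v (τ i)) := h1
    have h2' : StrictMono fun i => ω (v (τ' i)) := h2
    set g : Fin m → ℝ := fun i => ω (v i) with hg
    have hginj : Function.Injective g := by
      intro a b hab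
      have h3 : (fun i => ω (v (τ i))) (τ.symm a) = (fun i => ω (v (τ i))) (τ.symm b) := by
        simp only [Equiv.apply_symm_apply]; exact hab
      have h4 := h1'.injective h3
      have := congrArg τ h4
      simpa using this
    set s : Finset ℝ := Finset.univ.image g with hs
    have hcard : s.card = m := by
      rw [hs, Finset.card_image_of_injective _ hginj, Finset.card_univ, Fintype.card_fin]
    have e1 : (fun i => g (τ i)) = s.orderEmbOfFin hcard :=
      Finset.orderEmbOfFin_unique hcard
        (fun x => Finset.mem_image_of_mem _ (Finset.mem_univ _)) h1'
    have e2 : (fun i => g (τ' i)) = s.orderEmbOfFin hcard :=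
      Finset.orderEmbOfFin_unique hcard
        (fun x => Finset.mem_image_of_mem _ (Finset.mem_univ _)) h2'
    ext i
    exact congrArg Fin.val (hginj (congrFun (e1.trans e2.symm) i))
  have hSconst : ∀ τ, μ (S τ) = μ (S 1) := by
    intro τ
    set σ : Equiv.Perm ι := τ.extendDomain (Equiv.ofInjective v hv) with hσ
    have hσv : ∀ i, σ (v i) = v (τ i) := by
      intro i
      have := τ.extendDomain_apply_image (Equiv.ofInjective v hv) i
      exact this
    set T := MeasurableEquiv.arrowCongr' (σ⁻¹ : Equiv.Perm ι)
      (MeasurableEquiv.refl ℝ) with hT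
    have hTmp : MeasurePreserving T μ μ :=
      measurePreserving_arrowCongr' (fun _ : ι => μ0) (fun _ : ι => μ0)
        (σ⁻¹ : Equiv.Perm ι) (MeasurableEquiv.refl ℝ)
        (fun _ => MeasurePreserving.id μ0)
    have happ : ∀ (ω : ι → ℝ) (x : ι), T ω x = ω (σ x) := by
      intro ω x
      simp [hT, MeasurableEquiv.arrowCongr', Equiv.arrowCongr', Equiv.arrowCongr,
        Equiv.Perm.inv_def]
    have hset : S τ = T ⁻¹' (S 1) := by
      ext ω
      have hfun : (fun i => T ω (v ((1 : Equiv.Perm (Fin m)) i))) = fun i => ω (v (τ i)) := by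
        funext i
        rw [Equiv.Perm.coe_one, id_eq, happ, hσv]
      constructor
      · intro hw
        show StrictMono fun i => T ω (v ((1 : Equiv.Perm (Fin m)) i))
        rw [hfun]; exact hw
      · intro hw
        have : StrictMono fun i => T ω (v ((1 : Equiv.Perm (Fin m)) i)) := hw
        rw [hfun] at this; exact this
    rw [hset, hTmp.measure_preimage (hmeas 1).nullMeasurableSet]
  have hsum : ∑ τ : Equiv.Perm (Fin m), μ (S τ) = μ (⋃ τ, S τ) := by
    rw [measure_iUnion hdisj hmeas, tsum_fintype]
  have hconst : ∑ τ : Equiv.Perm (Fin m), μ (S τ) = (m.factorial : ENNReal) * μ (S 1) := by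
    rw [Finset.sum_congr rfl fun τ _ => hSconst τ, Finset.sum_const, Finset.card_univ,
      Fintype.card_perm, Fintype.card_fin, nsmul_eq_mul]
  have hS1 : S 1 = {ω | StrictMono fun i => ω (v i)} := by
    ext ω; simp [hSdef]
  calc (m.factorial : ENNReal) * μ {ω | StrictMono fun i => ω (v i)}
      = (m.factorial : ENNReal) * μ (S 1) := by rw [hS1]
    _ = ∑ τ : Equiv.Perm (Fin m), μ (S τ) := hconst.symm
    _ = μ (⋃ τ, S τ) := hsum
    _ ≤ 1 := prob_le_one

instance treeLabelMeasure_isProbabilityMeasure (n h : ℕ) :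
    IsProbabilityMeasure (treeLabelMeasure n h) :=
  inferInstanceAs (IsProbabilityMeasure (Measure.pi fun _ : TreeVertex n h =>
    (volume : Measure ℝ).restrict (Set.Icc 0 1)))

lemma kAccessibleEvent_one_subset (n h : ℕ) :
    kAccessibleEvent 1 n h ⊆
      ⋃ leaf : Fin h → Fin n,
        {ω : TreeVertex n h → ℝ | StrictMono fun i => ω (pathVertex leaf i)} := by
  rintro ω ⟨leaf, t, r, hr, hr0, hrl, hgap, hmono⟩
  refine Set.mem_iUnion.mpr ⟨leaf, ?_⟩
  have key : ∀ m : ℕ, ∀ hm : m < t + 1, (r ⟨m, hm⟩).val = m := by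
    intro m
    induction m with
    | zero =>
      intro hm
      rw [show (⟨0, hm⟩ : Fin (t+1)) = 0 from rfl, hr0]
      rfl
    | succ m ih =>
      intro hm
      have hmt : m < t := by omega
      have hm' : m < t + 1 := by omega
      have h1 := hgap ⟨m, hmt⟩
      have h2 := hr (show Fin.castSucc ⟨m, hmt⟩ < Fin.succ ⟨m, hmt⟩ from
        Fin.castSucc_lt_succ)
      rw [Fin.lt_def] at h2
      have hcs : (Fin.castSucc (⟨m, hmt⟩ : Fin t)) = ⟨m, hm'⟩ := rfl
      have hsc : (Fin.succ (⟨m, hmt⟩ : Fin t)) = ⟨m+1, hm⟩ := rfl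
      rw [hcs, hsc] at h1 h2
      have h3 := ih hm'
      omega
  have ht : t = h := by
    have h1 := key t (Nat.lt_succ_self t)
    have h2 : (r ⟨t, Nat.lt_succ_self t⟩).val = h := by
      rw [show (⟨t, Nat.lt_succ_self t⟩ : Fin (t+1)) = Fin.last t from rfl, hrl]
      rfl
    omega
  subst ht
  have hre : ∀ i : Fin (t+1), r i = i := by
    intro i
    have := key i.val i.isLt
    exact Fin.ext (by simpa using this)
  have hfun : (fun i => ω (pathVertex leaf (r i))) = fun i => ω (pathVertex leaf i) := by
    funext i; rw [hre i]
  show StrictMono fun i => ω (pathVertex leaf i)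
  rw [← hfun]
  exact hmono

lemma theta_one_le (n h : ℕ) :
    theta 1 n h ≤ (n : ℝ) ^ h / ((h+1).factorial : ℝ) := by
  classical
  set μ := treeLabelMeasure n h with hμdef
  set A : (Fin h → Fin n) → Set (TreeVertex n h → ℝ) :=
    fun leaf => {ω | StrictMono fun i => ω (pathVertex leaf i)} with hA
  have hAle : ∀ leaf, μ (A leaf) ≤ (((h+1).factorial : ENNReal))⁻¹ := by
    intro leaf
    have hinj : Function.Injective (pathVertex leaf) := by
      intro i j hij
      exact congrArg Sigma.fst hij
    have hball := factorial_mul_measure_strictMono_le (pathVertex leaf) hinj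
    rw [ENNReal.le_inv_iff_mul_le, mul_comm]
    exact hball
  have hE : μ (kAccessibleEvent 1 n h) ≤ (n : ENNReal) ^ h * (((h+1).factorial : ENNReal))⁻¹ := by
    calc μ (kAccessibleEvent 1 n h) ≤ μ (⋃ leaf : Fin h → Fin n, A leaf) :=
          measure_mono (kAccessibleEvent_one_subset n h)
      _ ≤ ∑' leaf : Fin h → Fin n, μ (A leaf) := measure_iUnion_le _
      _ = ∑ leaf : Fin h → Fin n, μ (A leaf) := tsum_fintype _
      _ ≤ ∑ _leaf : Fin h → Fin n, (((h+1).factorial : ENNReal))⁻¹ :=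
          Finset.sum_le_sum fun leaf _ => hAle leaf
      _ = (Fintype.card (Fin h → Fin n)) * (((h+1).factorial : ENNReal))⁻¹ := by
          rw [Finset.sum_const, Finset.card_univ, nsmul_eq_mul]
      _ = (n : ENNReal) ^ h * (((h+1).factorial : ENNReal))⁻¹ := by
          rw [Fintype.card_fun, Fintype.card_fin, Fintype.card_fin]
          push_cast
          rfl
  have hne : (n : ENNReal) ^ h * (((h+1).factorial : ENNReal))⁻¹ ≠ ⊤ :=
    ENNReal.mul_ne_top (by simp) (ENNReal.inv_ne_top.mpr (by
      exact_mod_cast Nat.factorial_ne_zero (h+1)))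
  have hmono := ENNReal.toReal_mono hne hE
  refine hmono.trans_eq ?_
  rw [ENNReal.toReal_mul, ENNReal.toReal_pow, ENNReal.toReal_inv, ENNReal.toReal_natCast,
    ENNReal.toReal_natCast, div_eq_mul_inv]


theorem theta_one_tendsto_zero_of_floor_linear
    (α : ℝ) (hα0 : 0 < α) (hα : α ≤ (Real.exp 1)⁻¹) (f : ℕ → ℕ)
    (hf : ∀ᶠ h : ℕ in atTop, f h ≤ ⌊α * (h : ℝ)⌋₊) :
    Tendsto (fun h : ℕ => theta 1 (f h) h) atTop (nhds 0) := by
  have hexp : (0:ℝ) < Real.exp 1 := Real.exp_pos 1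
  apply squeeze_zero' (Eventually.of_forall fun h => ENNReal.toReal_nonneg)
    ?_ tendsto_one_div_add_atTop_nhds_zero_nat
  filter_upwards [hf] with h hfh
  have h2 : (f h : ℝ) ≤ α * h :=
    le_trans (Nat.cast_le.mpr hfh) (Nat.floor_le (by positivity))
  have h3 : α * Real.exp 1 ≤ 1 := by
    calc α * Real.exp 1 ≤ (Real.exp 1)⁻¹ * Real.exp 1 :=
          mul_le_mul_of_nonneg_right hα hexp.le
      _ = 1 := inv_mul_cancel₀ hexp.ne'
  have h1 : (f h : ℝ) * Real.exp 1 ≤ h := by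
    nlinarith [mul_le_mul_of_nonneg_right h2 hexp.le,
      mul_le_mul_of_nonneg_left h3 (Nat.cast_nonneg h : (0:ℝ) ≤ h)]
  have hfact : (f h : ℝ) ^ h ≤ (h.factorial : ℝ) := by
    have e1 : ((f h : ℝ) * Real.exp 1) ^ h ≤ (h : ℝ) ^ h :=
      pow_le_pow_left₀ (by positivity) h1 h
    have e2 : (h : ℝ) ^ h ≤ Real.exp 1 ^ h * (h.factorial : ℝ) := by
      have hd := Real.pow_div_factorial_le_exp (x := (h : ℝ)) (Nat.cast_nonneg h) h
      rw [div_le_iff₀ (by positivity : (0:ℝ) < (h.factorial : ℝ))] at hd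
      calc (h : ℝ) ^ h ≤ Real.exp h * (h.factorial : ℝ) := hd
        _ = Real.exp 1 ^ h * (h.factorial : ℝ) := by rw [Real.exp_one_pow]
    have e3 : (f h : ℝ) ^ h * Real.exp 1 ^ h ≤ (h.factorial : ℝ) * Real.exp 1 ^ h := by
      rw [← mul_pow]
      calc ((f h : ℝ) * Real.exp 1) ^ h ≤ (h : ℝ) ^ h := e1
        _ ≤ Real.exp 1 ^ h * (h.factorial : ℝ) := e2
        _ = (h.factorial : ℝ) * Real.exp 1 ^ h := mul_comm _ _
    exact le_of_mul_le_mul_right e3 (by positivity)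
  have hfpos : (0:ℝ) < ((h+1).factorial : ℝ) := by
    exact_mod_cast Nat.factorial_pos (h+1)
  calc theta 1 (f h) h ≤ (f h : ℝ) ^ h / ((h+1).factorial : ℝ) := theta_one_le _ _
    _ ≤ (h.factorial : ℝ) / ((h+1).factorial : ℝ) := by gcongr
    _ = 1 / ((h : ℝ) + 1) := by
        have hf0 : (h.factorial : ℝ) ≠ 0 := by
          exact_mod_cast (Nat.factorial_pos h).ne'
        have hh0 : ((h:ℝ) + 1) ≠ 0 := by positivity
        rw [Nat.factorial_succ]
        push_cast
        field_simp
end
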